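/- arXiv:1509.01675 — 7 statements merged into one kernel-verified Lean document; each statement's English description precedes it below -/
import Mathlib

section
/- Let D be a connected rooted digraph, let v ≠ r be a vertex of D, and let D' be the digraph obtained from D by duplicating v. Then |sp(D')| ≥ |sp(D)| and maxleaf(D) ≥ maxleaf(D') − 1. -/
namespace OutBranching

variable {V : Type}

/-! ### Basic digraph notions -/

/-- `b` is reachable from `a` by a directed path. -/
def Reaches (E : V → V → Prop) (a b : V) : Prop := Relation.ReflTransGen E a b

/-- The rooted digraph `(E, r)` is connected: every vertex is reachable from the root. -/
def Connected (E : V → V → Prop) (r : V) : Prop := ∀ v, Reaches E r v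

/-- `b` is reachable from `a` by a directed path avoiding the vertex set `S`. -/
def ReachAvoid (E : V → V → Prop) (S : Set V) (a b : V) : Prop :=
  a ∉ S ∧ b ∉ S ∧ Relation.ReflTransGen (fun x y => E x y ∧ x ∉ S ∧ y ∉ S) a b

/-- A cut-vertex: a vertex `v ≠ r` whose removal makes some (other) vertex unreachable
from the root `r`. -/
def IsCutVertex (E : V → V → Prop) (r v : V) : Prop :=
  v ≠ r ∧ ∃ u, u ≠ v ∧ ¬ ReachAvoid E {v} r u

/-- The set of cut-vertices. -/
def cutVertices (E : V → V → Prop) (r : V) : Set V := {v | IsCutVertex E r v}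

/-- The edge relation obtained by deleting the single edge `(u,v)`. -/
def delEdge (E : V → V → Prop) (u v : V) : V → V → Prop :=
  fun a b => E a b ∧ ¬ (a = u ∧ b = v)

/-- A cut-edge: an edge `(u,v)` whose deletion makes some vertex unreachable from `r`. -/
def IsCutEdge (E : V → V → Prop) (r u v : V) : Prop :=
  E u v ∧ ∃ w, ¬ Reaches (delEdge E u v) r w

/-- A lonely cut-edge: no other cut-edge has the same tail. -/
def IsLonelyCutEdge (E : V → V → Prop) (r u v : V) : Prop :=
  IsCutEdge E r u v ∧ ∀ w, IsCutEdge E r u w → w = v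

/-- A branching cut-edge: some other cut-edge has the same tail. -/
def IsBranchingCutEdge (E : V → V → Prop) (r u v : V) : Prop :=
  IsCutEdge E r u v ∧ ∃ w, w ≠ v ∧ IsCutEdge E r u w

/-- In-neighbourhood. -/
def inN (E : V → V → Prop) (v : V) : Set V := {u | E u v}

/-- Out-neighbourhood. -/
def outN (E : V → V → Prop) (v : V) : Set V := {w | E v w}

/-- Private neighbors of `u`: out-neighbors of `u` not reachable from `r` in `D - u`. -/
def privateNbrs (E : V → V → Prop) (r u : V) : Set V :=
  {v | E u v ∧ ¬ ReachAvoid E {u} r v}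

/-- A special vertex: in-degree at least 3, or an incoming simple edge. -/
def Special (E : V → V → Prop) (v : V) : Prop :=
  3 ≤ (inN E v).ncard ∨ ∃ u, E u v ∧ ¬ E v u

/-- The set of special vertices. -/
def sp (E : V → V → Prop) : Set V := {v | Special E v}

/-! ### Outbranchings and `maxleaf` -/

/-- `T` is an outbranching of `(E, r)`: a spanning subdigraph in which every vertex is
reachable from `r`, every vertex other than `r` has in-degree exactly 1,
and `r` has in-degree 0. -/
structure IsOutbranching (E : V → V → Prop) (r : V) (T : V → V → Prop) : Prop where
  sub : ∀ ⦃a b⦄, T a b → E a b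
  reach : ∀ v, Reaches T r v
  indeg : ∀ v, v ≠ r → ∃! u, T u v
  rootIndeg : ∀ u, ¬ T u r

/-- The number of leaves (vertices of out-degree 0) of `T`. -/
noncomputable def leafCount (T : V → V → Prop) : ℕ := {v | ∀ w, ¬ T v w}.ncard

/-- The maximum number of leaves over all outbranchings of `(E, r)`. -/
noncomputable def maxleaf (E : V → V → Prop) (r : V) : ℕ :=
  sSup {n | ∃ T, IsOutbranching E r T ∧ leafCount T = n}

/-! ### The reduction rules (each `RuleᵢNA` says that rule i does NOT apply) -/

/-- Rule 1 does not apply: every vertex is reachable from the root. -/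
def Rule1NA (E : V → V → Prop) (r : V) : Prop := Connected E r

/-- Rule 2 does not apply: no cut-vertex has exactly one incoming edge,
and no cut-vertex has exactly one outgoing edge. -/
def Rule2NA (E : V → V → Prop) (r : V) : Prop :=
  ∀ v, IsCutVertex E r v → ¬ (∃! u, E u v) ∧ ¬ (∃! w, E v w)

/-- Rule 3 does not apply: there is no proper bipath of length 4, i.e. no sequence
of 5 distinct vertices `a b c d e` whose three internal vertices have their in- and
out-neighbourhoods equal to the pair of adjacent vertices on the sequence. -/
def Rule3NA (E : V → V → Prop) : Prop :=
  ¬ ∃ a b c d e : V, List.Pairwise (· ≠ ·) [a, b, c, d, e] ∧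
    (∀ w, (E w b ↔ w = a ∨ w = c) ∧ (E b w ↔ w = a ∨ w = c)) ∧
    (∀ w, (E w c ↔ w = b ∨ w = d) ∧ (E c w ↔ w = b ∨ w = d)) ∧
    (∀ w, (E w d ↔ w = c ∨ w = e) ∧ (E d w ↔ w = c ∨ w = e))

/-- Rule 4 does not apply: there is no vertex `x` with an in-neighbor `y` such that
removing all in-neighbors of `x` other than `y` disconnects `y` from `r`. -/
def Rule4NA (E : V → V → Prop) (r : V) : Prop :=
  ¬ ∃ x y, E y x ∧ ¬ ReachAvoid E {v | E v x ∧ v ≠ y} r y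

/-- Rule 5 does not apply: there are no two cut-edges `(x₁,y₁)`, `(x₂,y₂)` with both
`(x₁,x₂)` and `(x₂,x₁)` being edges. -/
def Rule5NA (E : V → V → Prop) (r : V) : Prop :=
  ¬ ∃ x₁ y₁ x₂ y₂, IsCutEdge E r x₁ y₁ ∧ IsCutEdge E r x₂ y₂ ∧ E x₁ x₂ ∧ E x₂ x₁

/-- Rule 6 does not apply: there is no cut-edge `(u,v)` with `(v,u)` an edge. -/
def Rule6NA (E : V → V → Prop) (r : V) : Prop :=
  ¬ ∃ u v, IsCutEdge E r u v ∧ E v u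

/-- Reduction rules R1–R4 do not apply. -/
def Reduced4 (E : V → V → Prop) (r : V) : Prop :=
  Rule1NA E r ∧ Rule2NA E r ∧ Rule3NA E ∧ Rule4NA E r

/-- Reduction rules R1–R6 do not apply. -/
def Reduced6 (E : V → V → Prop) (r : V) : Prop :=
  Reduced4 E r ∧ Rule5NA E r ∧ Rule6NA E r

/-! ### Contraction -/

/-- The setoid on `V` generated by identifying the endpoints of the edges in `C`. -/
def contractSetoid (C : V → V → Prop) : Setoid V := Relation.EqvGen.setoid C

/-- Vertices of the digraph obtained by contracting all edges in `C`. -/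
def CVert (C : V → V → Prop) : Type := Quotient (contractSetoid C)

/-- The projection of a vertex to the contracted digraph. -/
def cmk (C : V → V → Prop) (x : V) : CVert C := Quotient.mk (contractSetoid C) x

/-- The edge relation of the digraph obtained from `E` by contracting all edges in `C`
(loops and parallel edges are discarded). -/
def contractE (E : V → V → Prop) (C : V → V → Prop) : CVert C → CVert C → Prop :=
  fun a b => a ≠ b ∧ ∃ x y, cmk C x = a ∧ cmk C y = b ∧ E x y

/-- The relation consisting of a single edge `(u,v)` (used for contracting one edge). -/
def singleEdge (u v : V) : V → V → Prop := fun a b => a = u ∧ b = v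

/-- The relation of lonely cut-edges. -/
def lonelyRel (E : V → V → Prop) (r : V) : V → V → Prop :=
  fun u v => IsLonelyCutEdge E r u v

/-- Vertices of the contracted graph `D_c`, obtained by contracting all lonely cut-edges. -/
def ContractedVert (E : V → V → Prop) (r : V) : Type := CVert (lonelyRel E r)

/-- The edge relation of the contracted graph `D_c`. -/
def contractedE (E : V → V → Prop) (r : V) : ContractedVert E r → ContractedVert E r → Prop :=
  contractE E (lonelyRel E r)

/-- The root of the contracted graph `D_c`. -/
def contractedRoot (E : V → V → Prop) (r : V) : ContractedVert E r := cmk (lonelyRel E r) r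

/-- The bag of a vertex of `D_c`: the set of original vertices contracted into it. -/
def bag (E : V → V → Prop) (r : V) (a : ContractedVert E r) : Set V :=
  {x | cmk (lonelyRel E r) x = a}

/-- `t` is a tail of the bag `B`: it is the tail of a contracted (lonely) cut-edge inside `B`,
or `B` is the singleton `{t}`. -/
def IsTailOf (E : V → V → Prop) (r : V) (B : Set V) (t : V) : Prop :=
  t ∈ B ∧ (B = {t} ∨ ∃ h ∈ B, IsLonelyCutEdge E r t h)

/-- `h` is a head of the bag `B`: it is the head of a contracted (lonely) cut-edge inside `B`,
or `B` is the singleton `{h}`. -/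
def IsHeadOf (E : V → V → Prop) (r : V) (B : Set V) (h : V) : Prop :=
  h ∈ B ∧ (B = {h} ∨ ∃ t ∈ B, IsLonelyCutEdge E r t h)

/-- Two bags are linked if there is an edge of `D` in each direction between them. -/
def LinkedBags (E : V → V → Prop) (A B : Set V) : Prop :=
  (∃ x ∈ A, ∃ y ∈ B, E x y) ∧ (∃ x ∈ B, ∃ y ∈ A, E x y)

/-! ### Duplication of a vertex -/

/-- Duplicating the vertex `v`: the new vertex is `none`, receiving/sending edges exactly
as `v` does. -/
def dupE (E : V → V → Prop) (v : V) : Option V → Option V → Prop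
  | some a, some b => E a b
  | some a, none => E a v
  | none, some b => E v b
  | none, none => False

/-! ### Undirected notions: underlying graph, minors -/

/-- The underlying undirected simple graph of a digraph. -/
def underlying (E : V → V → Prop) : SimpleGraph V where
  Adj a b := a ≠ b ∧ (E a b ∨ E b a)
  symm := ⟨fun a b h => ⟨Ne.symm h.1, h.2.symm⟩⟩
  loopless := ⟨fun a h => h.1 rfl⟩

/-- `H` is a minor of `G`: there is a minor model of `H` in `G`. -/
def IsMinorOf {W U : Type} (H : SimpleGraph W) (G : SimpleGraph U) : Prop :=
  ∃ I : W → Set U,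
    (∀ u, (G.induce (I u)).Connected) ∧
    (Pairwise fun u v => Disjoint (I u) (I v)) ∧
    (∀ u v, H.Adj u v → ∃ x ∈ I u, ∃ y ∈ I v, G.Adj x y)

/-- `G` is `H`-minor-free. -/
def MinorFree {W U : Type} (H : SimpleGraph W) (G : SimpleGraph U) : Prop := ¬ IsMinorOf H G

/-! ### Weak bipaths -/

/-- A weak bipath in a digraph: a sequence of at least 3 distinct vertices whose internal
vertices have in-neighbourhood exactly the two adjacent vertices of the sequence, both
of which are also out-neighbours. -/
structure WeakBipath {W : Type} (E : W → W → Prop) where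
  len : ℕ
  u : Fin (len + 3) → W
  inj : Function.Injective u
  cond : ∀ i j k : Fin (len + 3), j.val + 1 = i.val → i.val + 1 = k.val →
    (∀ w, E w (u i) ↔ (w = u j ∨ w = u k)) ∧ E (u i) (u j) ∧ E (u i) (u k)

/-- The set of internal vertices of a weak bipath. -/
def WeakBipath.internal {W : Type} {E : W → W → Prop} (P : WeakBipath E) : Set W :=
  {w | ∃ i : Fin (P.len + 3), 0 < i.val ∧ i.val < P.len + 2 ∧ P.u i = w}

/-- The first extremity of a weak bipath. -/
def WeakBipath.first {W : Type} {E : W → W → Prop} (P : WeakBipath E) : W := P.u 0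

/-- The last extremity of a weak bipath. -/
def WeakBipath.last {W : Type} {E : W → W → Prop} (P : WeakBipath E) : W :=
  P.u (Fin.last (P.len + 2))

/-! ### Auxiliary lemmas for Statement 2 -/

private lemma anc_aux {W : Type} {E : W → W → Prop} {r : W} {T : W → W → Prop}
    (hT : IsOutbranching E r T) {z : W} (hz : Relation.ReflTransGen T r z) :
    ∀ x, T x z → Relation.ReflTransGen T r x ∧ ¬ Relation.ReflTransGen T z x := by
  induction hz with
  | refl => exact fun x hx => absurd hx (hT.rootIndeg x)
  | @tail b c hrb e ih =>
    intro x hx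
    have hcr : c ≠ r := fun h => hT.rootIndeg x (h ▸ hx)
    obtain ⟨u, _, huniq⟩ := hT.indeg c hcr
    have hxb : x = b := (huniq x hx).trans (huniq b e).symm
    subst hxb
    refine ⟨hrb, fun hcb => ?_⟩
    rcases Relation.ReflTransGen.cases_tail hcb with h | ⟨m, hcm, hmb⟩
    · subst h; exact (ih x e).2 Relation.ReflTransGen.refl
    · exact (ih m hmb).2 (Relation.ReflTransGen.head e hcm)

private lemma no_cycle {W : Type} {E : W → W → Prop} {r : W} {T : W → W → Prop}
    (hT : IsOutbranching E r T) {x z : W} (hxz : T x z)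
    (hzx : Relation.ReflTransGen T z x) : False :=
  (anc_aux hT (hT.reach z) x hxz).2 hzx

private lemma reach_antisymm {W : Type} {E : W → W → Prop} {r : W} {T : W → W → Prop}
    (hT : IsOutbranching E r T) {p q : W}
    (hpq : Relation.ReflTransGen T p q) (hqp : Relation.ReflTransGen T q p) : p = q := by
  rcases Relation.ReflTransGen.cases_head hpq with h | ⟨m, e, hm⟩
  · exact h
  · exact absurd (hm.trans hqp) (fun h => no_cycle hT e h)

private lemma avoid2 {α : Type} {R : α → α → Prop} {z₁ z₂ a b : α}
    (h : Relation.ReflTransGen R a b) :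
    ¬ Relation.ReflTransGen R z₁ b → ¬ Relation.ReflTransGen R z₂ b →
    Relation.ReflTransGen (fun x y => R x y ∧ y ≠ z₁ ∧ y ≠ z₂) a b := by
  induction h with
  | refl => intro _ _; exact Relation.ReflTransGen.refl
  | @tail m c h' e ih =>
    intro h1 h2
    have h1' : ¬ Relation.ReflTransGen R z₁ m := fun hh => h1 (hh.tail e)
    have h2' : ¬ Relation.ReflTransGen R z₂ m := fun hh => h2 (hh.tail e)
    refine (ih h1' h2').tail ⟨e, ?_, ?_⟩
    · intro hc; subst hc; exact h1 Relation.ReflTransGen.refl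
    · intro hc; subst hc; exact h2 Relation.ReflTransGen.refl

/-- Duplicating a vertex `v ≠ r` of a connected rooted digraph does not
decrease the number of special vertices, and `maxleaf(D) ≥ maxleaf(D') − 1`. -/
theorem duplicate_vertex {V : Type} [Fintype V] (E : V → V → Prop) (r v : V)
    (hroot : ∀ u, ¬ E u r) (hconn : Connected E r) (hv : v ≠ r) :
    (sp E).ncard ≤ (sp (dupE E v)).ncard ∧
      maxleaf (dupE E v) (some r) ≤ maxleaf E r + 1 := by
  classical
  constructor
  · -- special vertices do not decrease
    have hsub : (Option.some '' sp E) ⊆ sp (dupE E v) := by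
      rintro _ ⟨u, hu, rfl⟩
      simp only [sp, Set.mem_setOf_eq, Special] at hu ⊢
      rcases hu with h3 | ⟨w, hwu, hnuw⟩
      · left
        have himg : (Option.some '' inN E u) ⊆ inN (dupE E v) (some u) := by
          rintro _ ⟨w, hw, rfl⟩
          exact hw
        calc 3 ≤ (inN E u).ncard := h3
          _ = (Option.some '' inN E u).ncard :=
              (Set.ncard_image_of_injective _ (Option.some_injective V)).symm
          _ ≤ (inN (dupE E v) (some u)).ncard := Set.ncard_le_ncard himg (Set.toFinite _)
      · exact Or.inr ⟨some w, hwu, hnuw⟩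
    calc (sp E).ncard = (Option.some '' sp E).ncard :=
          (Set.ncard_image_of_injective _ (Option.some_injective V)).symm
      _ ≤ (sp (dupE E v)).ncard := Set.ncard_le_ncard hsub (Set.toFinite _)
  · -- maxleaf bound
    rcases Set.eq_empty_or_nonempty
        {n | ∃ T, IsOutbranching (dupE E v) (some r) T ∧ leafCount T = n} with he | hne
    · unfold maxleaf
      rw [he, csSup_empty]
      exact Nat.zero_le _
    · unfold maxleaf
      refine csSup_le hne ?_
      rintro n ⟨T', hT', rfl⟩
      -- the parent-of-`v` predicate in the collapsed tree
      set A := Relation.ReflTransGen T' none (some v) with hA_def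
      set Pv : V → Prop :=
        fun a => if A then T' (some a) none else T' (some a) (some v) with hPv_def
      set T : V → V → Prop :=
        fun a b => if b = v then Pv a
          else (T' (some a) (some b) ∨ (a = v ∧ T' none (some b))) with hT_def
      have hTv : ∀ a, T a v = Pv a := fun a => if_pos rfl
      have hTne : ∀ a b, b ≠ v →
          T a b = (T' (some a) (some b) ∨ (a = v ∧ T' none (some b))) :=
        fun a b h => if_neg h
      have hPvA : ∀ (_ : A) a, Pv a = T' (some a) none := fun h a => if_pos h
      have hPvN : ∀ (_ : ¬A) a, Pv a = T' (some a) (some v) := fun h a => if_neg h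
      have hnn : ¬ T' none none := fun h => (hT'.sub h : False)
      have hPsub : ∀ a, Pv a → E a v := by
        intro a ha
        by_cases hA : A
        · rw [hPvA hA] at ha; exact (hT'.sub ha : E a v)
        · rw [hPvN hA] at ha; exact (hT'.sub ha : E a v)
      have hPuniq : ∃! a, Pv a := by
        by_cases hA : A
        · obtain ⟨u, hu, hun⟩ := hT'.indeg none (by simp)
          cases u with
          | none => exact absurd hu hnn
          | some a₀ =>
            refine ⟨a₀, ?_, ?_⟩
            · show Pv a₀
              rw [hPvA hA]; exact hu
            · intro a ha
              have ha' : Pv a := ha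
              rw [hPvA hA] at ha'
              exact Option.some.inj (hun _ ha')
        · obtain ⟨u, hu, hun⟩ := hT'.indeg (some v) (by simpa using hv)
          cases u with
          | none => exact absurd (Relation.ReflTransGen.single hu) hA
          | some a₀ =>
            refine ⟨a₀, ?_, ?_⟩
            · show Pv a₀
              rw [hPvN hA]; exact hu
            · intro a ha
              have ha' : Pv a := ha
              rw [hPvN hA] at ha'
              exact Option.some.inj (hun _ ha')
      have hPleaf : ∀ a, Pv a → ∃ w, T' (some a) w := by
        intro a ha
        by_cases hA : A
        · rw [hPvA hA] at ha; exact ⟨none, ha⟩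
        · rw [hPvN hA] at ha; exact ⟨some v, ha⟩
      -- reachability of `v` in the collapsed tree
      have hvreach : Relation.ReflTransGen T r v := by
        by_cases hA : A
        · obtain ⟨a₀, ha₀, _⟩ := hPuniq
          have hu : T' (some a₀) none := (hPvA hA a₀) ▸ ha₀
          have pre1 : ¬ Relation.ReflTransGen T' none (some a₀) :=
            fun h => no_cycle hT' hu h
          have pre2 : ¬ Relation.ReflTransGen T' (some v) (some a₀) := by
            intro h
            have h2 : Relation.ReflTransGen T' (some v) none := h.tail hu
            have := reach_antisymm hT' h2 hA
            simp at this
          have hpath := avoid2 (hT'.reach (some a₀)) pre1 pre2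
          have hmap : ∀ c, Relation.ReflTransGen
              (fun x y => T' x y ∧ y ≠ none ∧ y ≠ some v) (some r) c →
              ∃ c', c = some c' ∧ c' ≠ v ∧ Relation.ReflTransGen T r c' := by
            intro c hc
            induction hc with
            | refl => exact ⟨r, rfl, Ne.symm hv, Relation.ReflTransGen.refl⟩
            | @tail m c h' e ih =>
              obtain ⟨m', rfl, hmv, hm⟩ := ih
              obtain ⟨e', hn1, hn2⟩ := e
              cases c with
              | none => exact absurd rfl hn1
              | some y =>
                have hyv : y ≠ v := fun h => hn2 (by rw [h])
                refine ⟨y, rfl, hyv, hm.tail ?_⟩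
                rw [hTne _ _ hyv]
                exact Or.inl e'
          obtain ⟨a₀', heq, _, hra⟩ := hmap _ hpath
          have ha' : a₀' = a₀ := (Option.some.inj heq).symm
          rw [ha'] at hra
          refine hra.tail ?_
          rw [hTv]
          exact ha₀
        · have hpath := avoid2 (hT'.reach (some v)) hA hA
          have hmap : ∀ c, Relation.ReflTransGen
              (fun x y => T' x y ∧ y ≠ none ∧ y ≠ none) (some r) c →
              ∃ c', c = some c' ∧ Relation.ReflTransGen T r c' := by
            intro c hc
            induction hc with
            | refl => exact ⟨r, rfl, Relation.ReflTransGen.refl⟩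
            | @tail m c h' e ih =>
              obtain ⟨m', rfl, hm⟩ := ih
              obtain ⟨e', hn1, _⟩ := e
              cases c with
              | none => exact absurd rfl hn1
              | some y =>
                refine ⟨y, rfl, hm.tail ?_⟩
                by_cases hyv : y = v
                · rw [hyv] at e' ⊢
                  rw [hTv, hPvN hA]
                  exact e'
                · rw [hTne _ _ hyv]
                  exact Or.inl e'
          obtain ⟨v', heq, hra⟩ := hmap _ hpath
          rw [show v' = v from (Option.some.inj heq).symm] at hra
          exact hra
      -- full reachability
      have hreach : ∀ b, Relation.ReflTransGen T r b := by
        have hmain : ∀ x, Relation.ReflTransGen T' (some r) x →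
            Relation.ReflTransGen T r (x.getD v) := by
          intro x hx
          induction hx with
          | refl => exact Relation.ReflTransGen.refl
          | @tail b' c h' e ih =>
            cases c with
            | none => exact hvreach
            | some y =>
              by_cases hyv : y = v
              · rw [hyv]; exact hvreach
              · cases b' with
                | some x' =>
                  refine ih.tail ?_
                  show T x' y
                  rw [hTne _ _ hyv]
                  exact Or.inl e
                | none =>
                  refine ih.tail ?_
                  show T v y
                  rw [hTne _ _ hyv]
                  exact Or.inr ⟨rfl, e⟩
        exact fun b => hmain (some b) (hT'.reach (some b))
      -- T is an outbranching of (E, r)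
      have hOut : IsOutbranching E r T := by
        refine ⟨?_, hreach, ?_, ?_⟩
        · intro a b hab
          by_cases hbv : b = v
          · rw [hbv] at hab ⊢
            rw [hTv] at hab
            exact hPsub a hab
          · rw [hTne _ _ hbv] at hab
            rcases hab with h | ⟨rfl, h⟩
            · exact (hT'.sub h : E a b)
            · exact (hT'.sub h : E _ b)
        · intro b hbr
          by_cases hbv : b = v
          · obtain ⟨a₀, ha₀, hun⟩ := hPuniq
            refine ⟨a₀, ?_, ?_⟩
            · show T a₀ b
              rw [hbv, hTv]; exact ha₀
            · intro a ha
              have ha' : T a b := ha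
              rw [hbv, hTv] at ha'
              exact hun a ha'
          · obtain ⟨u, hu, hun⟩ := hT'.indeg (some b) (by simpa using hbr)
            cases u with
            | some a₀ =>
              refine ⟨a₀, ?_, ?_⟩
              · show T a₀ b
                rw [hTne _ _ hbv]; exact Or.inl hu
              · intro a ha
                have ha' : T a b := ha
                rw [hTne _ _ hbv] at ha'
                rcases ha' with h | ⟨rfl, h⟩
                · exact Option.some.inj (hun _ h)
                · exact absurd (hun _ h) (by simp)
            | none =>
              refine ⟨v, ?_, ?_⟩
              · show T v b
                rw [hTne _ _ hbv]; exact Or.inr ⟨rfl, hu⟩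
              · intro a ha
                have ha' : T a b := ha
                rw [hTne _ _ hbv] at ha'
                rcases ha' with h | ⟨rfl, _⟩
                · exact absurd (hun _ h) (by simp)
                · rfl
        · intro u hur
          rw [hTne _ _ (Ne.symm hv)] at hur
          rcases hur with h | ⟨_, h⟩
          · exact hT'.rootIndeg _ h
          · exact hT'.rootIndeg _ h
      -- leaf counting
      set L' : Set (Option V) := {x | ∀ w, ¬ T' x w} with hL'_def
      set L : Set V := {a | ∀ w, ¬ T a w} with hL_def
      have key1 : ∀ a, a ≠ v → (∀ w, ¬ T' (some a) w) → a ∈ L := by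
        intro a hav hlf b hab
        by_cases hbv : b = v
        · rw [hbv, hTv] at hab
          obtain ⟨w, hw⟩ := hPleaf a hab
          exact hlf w hw
        · rw [hTne _ _ hbv] at hab
          rcases hab with h | ⟨rfl, _⟩
          · exact hlf _ h
          · exact hav rfl
      have key2 : (∀ w, ¬ T' (some v) w) → (∀ w, ¬ T' none w) → v ∈ L := by
        intro h1 h2 b hab
        by_cases hbv : b = v
        · rw [hbv, hTv] at hab
          obtain ⟨w, hw⟩ := hPleaf v hab
          exact h1 w hw
        · rw [hTne _ _ hbv] at hab
          rcases hab with h | ⟨_, h⟩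
          · exact h1 _ h
          · exact h2 _ h
      set z : Option V := if (some v ∈ L' ∧ v ∉ L) then some v else none with hz_def
      have hzP : ∀ (_ : some v ∈ L' ∧ v ∉ L), z = some v := fun h => if_pos h
      have hzN : ∀ (_ : ¬ (some v ∈ L' ∧ v ∉ L)), z = none := fun h => if_neg h
      have hsubL : L' ⊆ Option.some '' L ∪ {z} := by
        intro x hx
        cases x with
        | none =>
          right
          by_cases hc : (some v ∈ L' ∧ v ∉ L)
          · exact absurd (key2 hc.1 hx) hc.2
          · rw [hzN hc]
            rfl
        | some a =>
          by_cases hav : a = v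
          · by_cases hvL : v ∈ L
            · exact Or.inl ⟨v, hvL, by rw [hav]⟩
            · right
              rw [hav, hzP ⟨hav ▸ hx, hvL⟩]
              rfl
          · exact Or.inl ⟨a, key1 a hav hx, rfl⟩
      have hcount : leafCount T' ≤ leafCount T + 1 := by
        calc leafCount T' = L'.ncard := rfl
          _ ≤ (Option.some '' L ∪ {z}).ncard := Set.ncard_le_ncard hsubL (Set.toFinite _)
          _ ≤ (Option.some '' L).ncard + ({z} : Set (Option V)).ncard :=
              Set.ncard_union_le _ _
          _ = L.ncard + 1 := by
              rw [Set.ncard_image_of_injective _ (Option.some_injective V),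
                Set.ncard_singleton]
          _ = leafCount T + 1 := rfl
      have hbdd : BddAbove {n | ∃ S, IsOutbranching E r S ∧ leafCount S = n} := by
        refine ⟨Fintype.card V, ?_⟩
        rintro n ⟨S, _, rfl⟩
        calc leafCount S = {a | ∀ w, ¬ S a w}.ncard := rfl
          _ ≤ (Set.univ : Set V).ncard :=
              Set.ncard_le_ncard (Set.subset_univ _) Set.finite_univ
          _ = Fintype.card V := by rw [Set.ncard_univ, Nat.card_eq_fintype_card]
      have hle : leafCount T ≤ sSup {n | ∃ S, IsOutbranching E r S ∧ leafCount S = n} :=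
        le_csSup hbdd ⟨T, hOut, rfl⟩
      calc leafCount T' ≤ leafCount T + 1 := hcount
        _ ≤ sSup {n | ∃ S, IsOutbranching E r S ∧ leafCount S = n} + 1 :=
            Nat.add_le_add_right hle 1

end OutBranching
end

section
/- Let D be a connected rooted digraph such that reduction rules R1–R4 do not apply to D and every cut-edge of D is branching. Then maxleaf(D) ≥ cv(D) + 1. -/
namespace OutBranching

variable {V : Type}

/-! ### Auxiliary machinery for Statement 3 -/

section Statement3Aux

variable {E : V → V → Prop} {r : V}

/-- Walks of length `n` (built by appending edges at the end). -/
def RIn (E : V → V → Prop) : ℕ → V → V → Prop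
  | 0 => fun a b => a = b
  | (n+1) => fun a b => ∃ c, RIn E n a c ∧ E c b

lemma reaches_of_rin : ∀ {n : ℕ} {a b : V}, RIn E n a b → Reaches E a b := by
  intro n
  induction n with
  | zero => intro a b h; exact h ▸ Relation.ReflTransGen.refl
  | succ n ih =>
    rintro a b ⟨c, hc, hcb⟩
    exact Relation.ReflTransGen.tail (ih hc) hcb

lemma rin_of_reaches {a b : V} (h : Reaches E a b) : ∃ n, RIn E n a b := by
  induction h with
  | refl => exact ⟨0, rfl⟩
  | tail _ he ih => obtain ⟨n, hn⟩ := ih; exact ⟨n + 1, _, hn, he⟩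

/-- Splitting a walk at a vertex `v`: either the walk avoids `v`, or it passes through it. -/
lemma rin_split (v : V) :
    ∀ {n : ℕ} {a b : V}, RIn E n a b →
      Relation.ReflTransGen (fun x y => E x y ∧ x ≠ v ∧ y ≠ v) a b ∨
        ∃ j k, j + k = n ∧ RIn E j a v ∧ RIn E k v b := by
  intro n
  induction n with
  | zero =>
    intro a b h
    rcases eq_or_ne a v with rfl | hav
    · exact Or.inr ⟨0, 0, rfl, rfl, h⟩
    · exact Or.inl (h ▸ Relation.ReflTransGen.refl)
  | succ n ih =>
    rintro a b ⟨c, hc, hcb⟩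
    rcases ih hc with havoid | ⟨j, k, hjk, h1, h2⟩
    · rcases eq_or_ne b v with rfl | hbv
      · exact Or.inr ⟨n + 1, 0, by omega, ⟨c, hc, hcb⟩, rfl⟩
      · rcases eq_or_ne c v with rfl | hcv
        · exact Or.inr ⟨n, 1, by omega, hc, ⟨c, rfl, hcb⟩⟩
        · exact Or.inl (Relation.ReflTransGen.tail havoid ⟨hcb, hcv, hbv⟩)
    · exact Or.inr ⟨j, k + 1, by omega, h1, ⟨c, h2, hcb⟩⟩

lemma reachAvoid_singleton {v a b : V} :
    ReachAvoid E {v} a b ↔ a ≠ v ∧ b ≠ v ∧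
      Relation.ReflTransGen (fun x y => E x y ∧ x ≠ v ∧ y ≠ v) a b := by
  unfold ReachAvoid
  simp only [Set.mem_singleton_iff]

/-- Distance from `r`. -/
noncomputable def dd (E : V → V → Prop) (r u : V) : ℕ := sInf {n | RIn E n r u}

lemma dd_spec {u : V} (h : Reaches E r u) : RIn E (dd E r u) r u :=
  Nat.sInf_mem (rin_of_reaches h)

lemma dd_le {u : V} {n : ℕ} (h : RIn E n r u) : dd E r u ≤ n :=
  Nat.sInf_le h

lemma ne_root_of_not_reachAvoid {v w : V} (hvr : v ≠ r)
    (h : ¬ ReachAvoid E {v} r w) : w ≠ r := by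
  rintro rfl
  exact h (reachAvoid_singleton.mpr ⟨Ne.symm hvr, Ne.symm hvr, Relation.ReflTransGen.refl⟩)

/-- If every walk from `r` to `a` passes through `b`, then `b` is strictly closer. -/
lemma dd_lt (hcon : Connected E r) {a b : V} (hbr : b ≠ r) (hab : a ≠ b)
    (hU : ¬ ReachAvoid E {b} r a) : dd E r b < dd E r a := by
  rcases rin_split b (dd_spec (hcon a)) with havoid | ⟨j, k, hjk, h1, h2⟩
  · exact absurd (reachAvoid_singleton.mpr ⟨Ne.symm hbr, hab, havoid⟩) hU
  · have hk : k ≠ 0 := by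
      intro hk0
      subst hk0
      exact hab (h2.symm)
    have := dd_le h1
    omega

/-- Any vertex of `U(v)` is entered through an edge leaving `v` into `U(v)`. -/
lemma exists_entry {v : V} (hvr : v ≠ r) :
    ∀ {n : ℕ} {u : V}, RIn E n r u → u ≠ v → ¬ ReachAvoid E {v} r u →
      ∃ w, E v w ∧ w ≠ v ∧ ¬ ReachAvoid E {v} r w := by
  intro n
  induction n with
  | zero =>
    intro u h huv hRA
    exact absurd (reachAvoid_singleton.mpr ⟨Ne.symm hvr, huv, h ▸ Relation.ReflTransGen.refl⟩) hRA
  | succ n ih =>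
    rintro u ⟨c, hc, hcu⟩ huv hRA
    rcases eq_or_ne c v with rfl | hcv
    · exact ⟨u, hcu, huv, hRA⟩
    · by_cases hcA : ReachAvoid E {v} r c
      · rcases reachAvoid_singleton.mp hcA with ⟨h1, _, h3⟩
        exact absurd (reachAvoid_singleton.mpr
          ⟨h1, huv, Relation.ReflTransGen.tail h3 ⟨hcu, hcv, huv⟩⟩) hRA
      · exact ih hc hcv hcA

/-- If `w` is the unique entry point of `U(v)`, then `(v,w)` is a cut-edge. -/
lemma cutEdge_of_unique_entry {v w : V} (hvr : v ≠ r)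
    (hvw : E v w) (hwv : w ≠ v) (hwRA : ¬ ReachAvoid E {v} r w)
    (huniq : ∀ x, E v x → x ≠ v → ¬ ReachAvoid E {v} r x → x = w) :
    IsCutEdge E r v w := by
  refine ⟨hvw, w, fun hreach => ?_⟩
  obtain ⟨n, hn⟩ := rin_of_reaches hreach
  have key : ∀ n : ℕ, ∀ u : V, RIn (delEdge E v w) n r u → u ≠ v →
      ¬ ReachAvoid E {v} r u → False := by
    intro n
    induction n with
    | zero =>
      intro u h huv hRA
      exact hRA (reachAvoid_singleton.mpr ⟨Ne.symm hvr, huv, h ▸ Relation.ReflTransGen.refl⟩)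
    | succ n ih =>
      rintro u ⟨c, hc, hcu, hne⟩ huv hRA
      rcases eq_or_ne c v with rfl | hcv
      · exact hne ⟨rfl, huniq u hcu huv hRA⟩
      · by_cases hcA : ReachAvoid E {v} r c
        · rcases reachAvoid_singleton.mp hcA with ⟨h1, _, h3⟩
          exact hRA (reachAvoid_singleton.mpr
            ⟨h1, huv, Relation.ReflTransGen.tail h3 ⟨hcu, hcv, huv⟩⟩)
        · exact ih c hc hcv hcA
  exact key n w hn hwv hwRA

/-- The head of a cut-edge with tail `v` lies in `U(v)`. -/
lemma cutEdge_head_unreachable (hcon : Connected E r) {v z : V}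
    (h : IsCutEdge E r v z) : z ≠ v ∧ ¬ ReachAvoid E {v} r z := by
  obtain ⟨hvz, t, ht⟩ := h
  have hzv : z ≠ v := by
    rintro rfl
    apply ht
    have loop : ∀ n : ℕ, ∀ u : V, RIn E n r u → Reaches (delEdge E z z) r u := by
      intro n
      induction n with
      | zero => intro u h; exact h ▸ Relation.ReflTransGen.refl
      | succ n ih =>
        rintro u ⟨c, hc, hcu⟩
        by_cases hcase : c = z ∧ u = z
        · have : u = c := by rw [hcase.1, hcase.2]
          exact this ▸ ih c hc
        · exact Relation.ReflTransGen.tail (ih c hc) ⟨hcu, hcase⟩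
    obtain ⟨n, hn⟩ := rin_of_reaches (hcon t)
    exact loop n t hn
  refine ⟨hzv, fun hRA => ?_⟩
  have hz' : Reaches (delEdge E v z) r z := by
    rcases reachAvoid_singleton.mp hRA with ⟨_, _, h3⟩
    refine Relation.ReflTransGen.mono ?_ _ _ h3
    rintro x y ⟨hxy, hxv, _⟩
    exact ⟨hxy, fun hh => hxv hh.1⟩
  have loop : ∀ n : ℕ, ∀ u : V, RIn E n r u → Reaches (delEdge E v z) r u := by
    intro n
    induction n with
    | zero => intro u h; exact h ▸ Relation.ReflTransGen.refl
    | succ n ih =>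
      rintro u ⟨c, hc, hcu⟩
      by_cases hcase : c = v ∧ u = z
      · exact hcase.2 ▸ hz'
      · exact Relation.ReflTransGen.tail (ih c hc) ⟨hcu, hcase⟩
  obtain ⟨n, hn⟩ := rin_of_reaches (hcon t)
  exact ht (loop n t hn)

/-- Every cut-vertex has two distinct out-neighbours inside `U(v)`. -/
lemma two_children (hcon : Connected E r)
    (hbranching : ∀ u v, IsCutEdge E r u v → IsBranchingCutEdge E r u v)
    {v : V} (hv : IsCutVertex E r v) :
    ∃ w₁ w₂, w₁ ≠ w₂ ∧ (E v w₁ ∧ w₁ ≠ v ∧ ¬ ReachAvoid E {v} r w₁) ∧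
      (E v w₂ ∧ w₂ ≠ v ∧ ¬ ReachAvoid E {v} r w₂) := by
  obtain ⟨hvr, u, huv, huRA⟩ := hv
  obtain ⟨n, hn⟩ := rin_of_reaches (hcon u)
  obtain ⟨w, hw1, hw2, hw3⟩ := exists_entry hvr hn huv huRA
  by_cases hex : ∃ w', (E v w' ∧ w' ≠ v ∧ ¬ ReachAvoid E {v} r w') ∧ w' ≠ w
  · obtain ⟨w', hp, hne⟩ := hex
    exact ⟨w', w, hne, hp, hw1, hw2, hw3⟩
  · push_neg at hex
    have huniq : ∀ x, E v x → x ≠ v → ¬ ReachAvoid E {v} r x → x = w :=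
      fun x h1 h2 h3 => hex x ⟨h1, h2, h3⟩
    have hce := cutEdge_of_unique_entry hvr hw1 hw2 hw3 huniq
    obtain ⟨_, z, hz_ne, hcz⟩ := hbranching v w hce
    obtain ⟨hz1, hz2⟩ := cutEdge_head_unreachable hcon hcz
    exact absurd (huniq z hcz.1 hz1 hz2) hz_ne

/-- Uniqueness of the "good parent" of a vertex. -/
lemma goodparent_unique (hcon : Connected E r) {v v' u : V}
    (hv : IsCutVertex E r v) (hv' : IsCutVertex E r v')
    (h1 : E v u ∧ u ≠ v ∧ ¬ ReachAvoid E {v} r u)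
    (h2 : E v' u ∧ u ≠ v' ∧ ¬ ReachAvoid E {v'} r u) : v = v' := by
  by_contra hne
  have key : ∀ a b : V, a ≠ b → a ≠ r → b ≠ r →
      (E a u ∧ u ≠ a ∧ ¬ ReachAvoid E {a} r u) →
      (E b u ∧ u ≠ b ∧ ¬ ReachAvoid E {b} r u) → dd E r b < dd E r a := by
    intro a b hab har hbr ha hb
    -- first: a ∈ U(b), i.e. every walk to a passes b
    have haU : ¬ ReachAvoid E {b} r a := by
      intro hRA
      rcases reachAvoid_singleton.mp hRA with ⟨hx, hy, h3⟩
      exact hb.2.2 (reachAvoid_singleton.mpr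
        ⟨hx, hb.2.1, Relation.ReflTransGen.tail h3 ⟨ha.1, hy, hb.2.1⟩⟩)
    exact dd_lt hcon hbr hab haU
  have hlt1 := key v v' hne hv.1 hv'.1 h1 h2
  have hlt2 := key v' v (Ne.symm hne) hv'.1 hv.1 h2 h1
  omega

/-- Default parent: an in-neighbour strictly closer to the root. -/
lemma default_parent (hcon : Connected E r) {u : V} (hur : u ≠ r) :
    ∃ p, E p u ∧ dd E r p < dd E r u := by
  have hn := dd_spec (hcon u)
  rcases hm : dd E r u with _ | m
  · rw [hm] at hn
    exact absurd hn.symm hur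
  · rw [hm] at hn
    obtain ⟨c, hc, hcu⟩ := hn
    exact ⟨c, hcu, by have := dd_le hc; omega⟩

end Statement3Aux

/-- If reduction rules R1–R4 do not apply to the connected rooted
digraph `D` and every cut-edge of `D` is branching, then `maxleaf(D) ≥ cv(D) + 1`. -/
theorem maxleaf_ge_cutvertices {V : Type} [Fintype V] (E : V → V → Prop) (r : V)
    (hroot : ∀ u, ¬ E u r) (hred : Reduced4 E r)
    (hbranching : ∀ u v, IsCutEdge E r u v → IsBranchingCutEdge E r u v) :
    (cutVertices E r).ncard + 1 ≤ maxleaf E r := by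
  classical
  obtain ⟨hcon, -, -, -⟩ := hred
  -- the parent function
  let parent : V → V := fun u =>
    if h : ∃ v, IsCutVertex E r v ∧ E v u ∧ u ≠ v ∧ ¬ ReachAvoid E {v} r u then h.choose
    else if hr : u = r then u
    else (default_parent hcon hr).choose
  have hpar : ∀ u, u ≠ r → E (parent u) u ∧ dd E r (parent u) < dd E r u := by
    intro u hur
    by_cases h : ∃ v, IsCutVertex E r v ∧ E v u ∧ u ≠ v ∧ ¬ ReachAvoid E {v} r u
    · have hpu : parent u = h.choose := dif_pos h
      obtain ⟨hcv, hE, hne, hRA⟩ := h.choose_spec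
      exact hpu ▸ ⟨hE, dd_lt hcon hcv.1 hne hRA⟩
    · have hpu : parent u = (default_parent hcon hur).choose :=
        (dif_neg h).trans (dif_neg hur)
      obtain ⟨hE, hd⟩ := (default_parent hcon hur).choose_spec
      exact hpu ▸ ⟨hE, hd⟩
  have hgood : ∀ v u, IsCutVertex E r v → E v u → u ≠ v → ¬ ReachAvoid E {v} r u →
      parent u = v := by
    intro v u hcv hE hne hRA
    have h : ∃ v', IsCutVertex E r v' ∧ E v' u ∧ u ≠ v' ∧ ¬ ReachAvoid E {v'} r u :=
      ⟨v, hcv, hE, hne, hRA⟩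
    have hpu : parent u = h.choose := dif_pos h
    obtain ⟨hcv', hE', hne', hRA'⟩ := h.choose_spec
    rw [hpu]
    exact goodparent_unique hcon hcv' hcv ⟨hE', hne', hRA'⟩ ⟨hE, hne, hRA⟩
  -- the outbranching
  set T : V → V → Prop := fun x y => y ≠ r ∧ parent y = x with hTdef
  have hT : IsOutbranching E r T := by
    refine ⟨?_, ?_, ?_, ?_⟩
    · rintro a b ⟨hbr, hpb⟩
      exact hpb ▸ (hpar b hbr).1
    · have key : ∀ n : ℕ, ∀ u : V, dd E r u < n → Reaches T r u := by
        intro n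
        induction n with
        | zero => intro u h; exact absurd h (Nat.not_lt_zero _)
        | succ n ih =>
          intro u hu
          by_cases hur : u = r
          · exact hur ▸ Relation.ReflTransGen.refl
          · obtain ⟨hE, hd⟩ := hpar u hur
            exact Relation.ReflTransGen.tail (ih (parent u) (by omega)) ⟨hur, rfl⟩
      intro u
      exact key (dd E r u + 1) u (Nat.lt_succ_self _)
    · intro v hvr
      exact ⟨parent v, ⟨hvr, rfl⟩, fun y hy => hy.2.symm⟩
    · intro u h
      exact h.1 rfl
  -- counting
  set C : Finset V := Finset.univ.filter (fun v => IsCutVertex E r v) with hCdef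
  have hcv_card : (cutVertices E r).ncard = C.card := by
    have hset : cutVertices E r = ↑C := by
      ext x
      simp [cutVertices, hCdef]
    rw [hset, Set.ncard_coe_finset]
  set s : Finset V := Finset.univ.filter (fun b : V => b ≠ r) with hsdef
  set out : V → ℕ := fun a => (s.filter fun b => parent b = a).card with houtdef
  have hsum : ∑ a, out a = s.card :=
    (Finset.card_eq_sum_card_fiberwise fun b _ => Finset.mem_univ (parent b)).symm
  have hscard : s.card = Fintype.card V - 1 := by
    rw [hsdef, Finset.filter_ne', Finset.card_erase_of_mem (Finset.mem_univ r),
      Finset.card_univ]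
  set LF : Finset V := Finset.univ.filter (fun a => out a = 0) with hLFdef
  set IF : Finset V := Finset.univ.filter (fun a => ¬ out a = 0) with hIFdef
  have hLI : LF.card + IF.card = Fintype.card V := by
    rw [hLFdef, hIFdef, Finset.card_filter_add_card_filter_not, Finset.card_univ]
  have hsplit : ∑ a ∈ LF, out a + ∑ a ∈ IF, out a = ∑ a, out a := by
    rw [hLFdef, hIFdef]
    exact Finset.sum_filter_add_sum_filter_not _ _ _
  have hLzero : ∑ a ∈ LF, out a = 0 := by
    refine Finset.sum_eq_zero fun a ha => ?_
    exact (Finset.mem_filter.mp ha).2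
  have hC2 : ∀ v ∈ C, 2 ≤ out v := by
    intro v hv
    have hcv : IsCutVertex E r v := (Finset.mem_filter.mp hv).2
    obtain ⟨w₁, w₂, hw12, ⟨hE1, hne1, hRA1⟩, ⟨hE2, hne2, hRA2⟩⟩ :=
      two_children hcon hbranching hcv
    have hm1 : w₁ ∈ s.filter fun b => parent b = v := by
      refine Finset.mem_filter.mpr ⟨?_, hgood v w₁ hcv hE1 hne1 hRA1⟩
      exact Finset.mem_filter.mpr ⟨Finset.mem_univ _, ne_root_of_not_reachAvoid hcv.1 hRA1⟩
    have hm2 : w₂ ∈ s.filter fun b => parent b = v := by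
      refine Finset.mem_filter.mpr ⟨?_, hgood v w₂ hcv hE2 hne2 hRA2⟩
      exact Finset.mem_filter.mpr ⟨Finset.mem_univ _, ne_root_of_not_reachAvoid hcv.1 hRA2⟩
    exact Finset.one_lt_card.mpr ⟨w₁, hm1, w₂, hm2, hw12⟩
  have hsub : C ⊆ IF := by
    intro v hv
    refine Finset.mem_filter.mpr ⟨Finset.mem_univ _, ?_⟩
    have := hC2 v hv
    omega
  have hIsum : ∑ a ∈ IF, out a = ∑ a ∈ IF \ C, out a + ∑ a ∈ C, out a :=
    (Finset.sum_sdiff hsub).symm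
  have hIlow : (IF \ C).card ≤ ∑ a ∈ IF \ C, out a := by
    have h := Finset.card_nsmul_le_sum (IF \ C) out 1 ?_
    · simpa using h
    · intro x hx
      have hxI : x ∈ IF := (Finset.mem_sdiff.mp hx).1
      have := (Finset.mem_filter.mp hxI).2
      omega
  have hClow : C.card * 2 ≤ ∑ a ∈ C, out a := by
    have h := Finset.card_nsmul_le_sum C out 2 hC2
    simpa [smul_eq_mul] using h
  have hsd : (IF \ C).card = IF.card - C.card := Finset.card_sdiff_of_subset hsub
  have hCI : C.card ≤ IF.card := Finset.card_le_card hsub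
  have hVpos : 0 < Fintype.card V := Fintype.card_pos_iff.mpr ⟨r⟩
  -- leaves
  have hleaf : leafCount T = LF.card := by
    have hset : {a | ∀ w, ¬ T a w} = ↑LF := by
      ext a
      simp only [Set.mem_setOf_eq, hLFdef, Finset.coe_filter, Finset.mem_univ, true_and,
        houtdef, Finset.card_eq_zero, Finset.filter_eq_empty_iff, hsdef, Finset.mem_filter,
        hTdef]
      tauto
    rw [leafCount, hset, Set.ncard_coe_finset]
  have hfinal : C.card + 1 ≤ leafCount T := by
    rw [hleaf]
    omega
  -- conclude
  have hbdd : BddAbove {n | ∃ T', IsOutbranching E r T' ∧ leafCount T' = n} := by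
    refine ⟨Fintype.card V, ?_⟩
    rintro m ⟨T', _, rfl⟩
    calc leafCount T' ≤ (Set.univ : Set V).ncard :=
          Set.ncard_le_ncard (Set.subset_univ _) Set.finite_univ
      _ = Fintype.card V := by rw [Set.ncard_univ, Nat.card_eq_fintype_card]
  have hmem : leafCount T ∈ {n | ∃ T', IsOutbranching E r T' ∧ leafCount T' = n} :=
    ⟨T, hT, rfl⟩
  calc (cutVertices E r).ncard + 1 = C.card + 1 := by rw [hcv_card]
    _ ≤ leafCount T := hfinal
    _ ≤ maxleaf E r := le_csSup hbdd hmem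

end OutBranching
end

section
/- Let D be a connected rooted digraph to which reduction rules R1–R4 do not apply, and let u be a cut-vertex of D or u = r. Then every private neighbor v ∈ P(u) has in-degree 1 in D, and (u,v) is a cut-edge. In particular, the head of every cut-edge of D has in-degree 1. -/
namespace OutBranching

variable {V : Type}

private lemma r4 {E : V → V → Prop} {r : V} (h : Rule4NA E r) {x y : V} (hyx : E y x) :
    ReachAvoid E {v | E v x ∧ v ≠ y} r y := by
  by_contra hc
  exact h ⟨x, y, hyx, hc⟩

private lemma noLoop {E : V → V → Prop} {r : V} (h : Rule4NA E r) {v : V} (hv : v ≠ r)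
    (hl : E v v) : False := by
  obtain ⟨hr, hv', hp⟩ := r4 h hl
  have key : ∀ z, Relation.ReflTransGen
      (fun a b => E a b ∧ a ∉ {w | E w v ∧ w ≠ v} ∧ b ∉ {w | E w v ∧ w ≠ v}) r z → z ≠ v := by
    intro z hz
    induction hz with
    | refl => exact fun h' => hv h'.symm
    | tail _ step ih =>
      intro hc
      subst hc
      exact ih (by by_contra hbv; exact step.2.1 ⟨step.1, hbv⟩)
  exact key v hp rfl

private lemma uniq_in {E : V → V → Prop} {r : V} (h4 : Rule4NA E r) {u v : V}
    (huv : E u v) (hnra : ¬ ReachAvoid E {u} r v) : ∀ w, E w v → w = u := by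
  intro w hwv
  by_contra hwu
  obtain ⟨hrS, hwS, hp⟩ := r4 h4 hwv
  by_cases hur : u = r
  · exact hrS ⟨hur ▸ huv, fun h => hwu (hur ▸ h.symm)⟩
  · have hvu : v ≠ u := by
      intro h
      subst h
      exact noLoop h4 hur huv
    apply hnra
    refine ⟨fun h => hur (Set.mem_singleton_iff.mp h).symm,
            fun h => hvu (Set.mem_singleton_iff.mp h), ?_⟩
    have hp' : Relation.ReflTransGen
        (fun a b => E a b ∧ a ∉ ({u} : Set V) ∧ b ∉ ({u} : Set V)) r w := by
      refine Relation.ReflTransGen.mono ?_ _ _ hp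
      rintro a b ⟨hab, haS, hbS⟩
      refine ⟨hab, ?_, ?_⟩
      · intro h
        rw [Set.mem_singleton_iff] at h
        subst h
        exact haS ⟨huv, fun h' => hwu h'.symm⟩
      · intro h
        rw [Set.mem_singleton_iff] at h
        subst h
        exact hbS ⟨huv, fun h' => hwu h'.symm⟩
    exact hp'.tail ⟨hwv, fun h => hwu (Set.mem_singleton_iff.mp h),
      fun h => hvu (Set.mem_singleton_iff.mp h)⟩

private lemma not_reach_del {E : V → V → Prop} {r u v : V}
    (huniq : ∀ w, E w v → w = u) (hvr : v ≠ r) : ¬ Reaches (delEdge E u v) r v := by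
  intro h
  have key : ∀ z, Relation.ReflTransGen (delEdge E u v) r z → z ≠ v := by
    intro z hz
    induction hz with
    | refl => exact fun h' => hvr h'.symm
    | tail _ step _ =>
      intro hc
      subst hc
      exact step.2 ⟨huniq _ step.1, rfl⟩
  exact key v h rfl

private lemma cutEdge_head_unreach {E : V → V → Prop} {r x y : V}
    (hconn : Connected E r) (hce : IsCutEdge E r x y) : ¬ Reaches (delEdge E x y) r y := by
  obtain ⟨hxy, w, hw⟩ := hce
  intro hy
  apply hw
  have main : ∀ t, Reaches E r t → Reaches (delEdge E x y) r t := by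
    intro t ht
    induction ht with
    | refl => exact Relation.ReflTransGen.refl
    | tail _ step ih =>
      rename_i b c _
      by_cases h' : b = x ∧ c = y
      · rw [h'.2]
        exact hy
      · exact ih.tail ⟨step, h'⟩
  exact main w (hconn w)

private lemma uniq_in_of_unreach {E : V → V → Prop} {r x y : V} (h4 : Rule4NA E r)
    (hxy : E x y) (hny : ¬ Reaches (delEdge E x y) r y) : ∀ w, E w y → w = x := by
  intro w hwy
  by_contra hwx
  obtain ⟨hrS, hwS, hp⟩ := r4 h4 hwy
  apply hny
  have hp' : Relation.ReflTransGen (delEdge E x y) r w := by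
    refine Relation.ReflTransGen.mono ?_ _ _ hp
    rintro a b ⟨hab, haS, _⟩
    refine ⟨hab, ?_⟩
    rintro ⟨rfl, rfl⟩
    exact haS ⟨hxy, fun h' => hwx h'.symm⟩
  exact hp'.tail ⟨hwy, fun h => hwx h.1⟩

/-- If reduction rules R1–R4 do not apply to the connected rooted digraph
`D` and `u` is a cut-vertex or the root, then every private neighbor `v ∈ P(u)` has
in-degree 1 and `(u,v)` is a cut-edge; in particular the head of every cut-edge has
in-degree 1. -/
theorem private_neighbors_indegree_one {V : Type} [Fintype V] (E : V → V → Prop) (r : V)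
    (hroot : ∀ u, ¬ E u r) (hred : Reduced4 E r) (u : V)
    (hu : IsCutVertex E r u ∨ u = r) :
    (∀ v ∈ privateNbrs E r u, (∃! w, E w v) ∧ IsCutEdge E r u v) ∧
      (∀ x y, IsCutEdge E r x y → ∃! w, E w y) := by
  obtain ⟨hconn, _, _, h4⟩ := hred
  constructor
  · intro v hv
    obtain ⟨huv, hnra⟩ := hv
    have huniq := uniq_in h4 huv hnra
    have hvr : v ≠ r := fun h => hroot u (h ▸ huv)
    exact ⟨⟨u, huv, huniq⟩, huv, v, not_reach_del huniq hvr⟩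
  · intro x y hce
    exact ⟨x, hce.1, uniq_in_of_unreach h4 hce.1 (cutEdge_head_unreach hconn hce)⟩

end OutBranching
end

section
/- Let D be a connected rooted digraph and let u ≠ r be a vertex that is not the head of any cut-edge. Then there exist two simple directed paths P_1, P_2 from r to u whose final edges are distinct, i.e., P_1 ends with an edge (a_1,u) and P_2 ends with an edge (a_2,u) where a_1 ≠ a_2. -/
namespace OutBranching

variable {V : Type}

section Aux
variable {α : Type*} {R : α → α → Prop} {b : α}

private theorem nodup_chain_aux : ∀ (n : ℕ) (l : List α) (a : α), l.length ≤ n →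
    List.Chain R a l → (a :: l).getLast? = some b →
    ∃ l', List.Chain R a l' ∧ (a :: l').getLast? = some b ∧ (a :: l').Nodup ∧ l' ⊆ l := by
  intro n
  induction n with
  | zero =>
    intro l a hl hc hlast
    have : l = [] := List.length_eq_zero_iff.1 (Nat.le_zero.1 hl)
    subst this
    exact ⟨[], by simpa using hc, by simpa using hlast, by simp, by simp⟩
  | succ n ih =>
    intro l a hl hc hlast
    match l with
    | [] => exact ⟨[], by simpa using hc, by simpa using hlast, by simp, by simp⟩
    | c :: l' =>
      by_cases ha : a ∈ c :: l'
      · obtain ⟨s, t, hst⟩ := List.append_of_mem ha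
        have hchain : List.Chain R a t := by
          have h1 : List.Chain' R (a :: (c :: l')) := hc
          rw [hst] at h1
          have hsuf : (a :: t) <:+ a :: (s ++ a :: t) := ⟨a :: s, by simp⟩
          exact h1.suffix hsuf
        have hlast' : (a :: t).getLast? = some b := by
          rw [hst, show a :: (s ++ a :: t) = (a :: s) ++ a :: t by simp,
            List.getLast?_append_cons] at hlast
          exact hlast
        have hlen : t.length ≤ n := by
          have := hl; rw [hst] at this; simp at this; omega
        obtain ⟨l'', h1, h2, h3, h4⟩ := ih t a hlen hchain hlast'
        refine ⟨l'', h1, h2, h3, fun x hx => ?_⟩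
        rw [hst]; simp [h4 hx]
      · rw [List.Chain, List.isChain_cons_cons] at hc
        have hlast' : (c :: l').getLast? = some b := by
          rwa [List.getLast?_cons_cons] at hlast
        obtain ⟨l'', h1, h2, h3, h4⟩ := ih l' c (by simpa using hl) hc.2 hlast'
        refine ⟨c :: l'', List.chain_cons.2 ⟨hc.1, h1⟩, ?_, ?_, ?_⟩
        · rwa [List.getLast?_cons_cons]
        · refine List.nodup_cons.2 ⟨?_, h3⟩
          intro hmem
          apply ha
          rcases List.mem_cons.1 hmem with h | h
          · simp [h]
          · exact List.mem_cons_of_mem _ (h4 h)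
        · intro x hx
          rcases List.mem_cons.1 hx with h | h
          · simp [h]
          · exact List.mem_cons_of_mem _ (h4 h)

private theorem exists_nodup_chain {a : α} (h : Relation.ReflTransGen R a b) :
    ∃ l, List.Chain R a l ∧ (a :: l).getLast? = some b ∧ (a :: l).Nodup := by
  obtain ⟨l, hc, hlast⟩ := List.exists_isChain_cons_of_relationReflTransGen h
  obtain ⟨l', h1, h2, h3, _⟩ := nodup_chain_aux l.length l a le_rfl hc
    (by rw [List.getLast?_eq_getLast (by simp), hlast])
  exact ⟨l', h1, h2, h3⟩

/-- extract path form l₁ ++ [a, u] -/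
private theorem exists_path {E : α → α → Prop} {r u : α} (h : Relation.ReflTransGen E r u)
    (hu : u ≠ r) :
    ∃ l a, E a u ∧ (l ++ [a, u]).head? = some r ∧ List.Chain' E (l ++ [a, u]) ∧
      (l ++ [a, u]).Nodup := by
  obtain ⟨l, hc, hlast, hnd⟩ := exists_nodup_chain h
  match l with
  | [] => simp at hlast; exact absurd hlast.symm hu
  | [c] =>
    refine ⟨[], r, ?_, by simp, ?_, ?_⟩
    · have hcu : c = u := by simpa using hlast
      subst hcu
      simpa [List.Chain] using hc
    · have hcu : c = u := by simpa using hlast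
      subst hcu; simpa [List.Chain, List.Chain'] using hc
    · have hcu : c = u := by simpa using hlast
      subst hcu; simpa using hnd
  | c :: d :: l' =>
    -- full list L = r :: c :: d :: l', last = u; write as init ++ [a, u]
    set L := r :: c :: d :: l' with hL
    have hlen : 2 ≤ L.length := by simp [hL]
    have hLlast : L.getLast? = some u := hlast
    -- L = L.dropLast ++ [u], L.dropLast = (L.dropLast).dropLast ++ [a]
    have hne : L ≠ [] := by simp [hL]
    have h1 : L = L.dropLast ++ [L.getLast hne] := (List.dropLast_append_getLast hne).symm
    have hgl : L.getLast hne = u := by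
      rw [List.getLast?_eq_getLast hne] at hLlast; exact Option.some_injective _ hLlast
    have hdne : L.dropLast ≠ [] := by
      intro hh
      rw [hh] at h1
      simp [hL] at h1
    have h2 : L.dropLast = L.dropLast.dropLast ++ [L.dropLast.getLast hdne] :=
      (List.dropLast_append_getLast hdne).symm
    refine ⟨L.dropLast.dropLast, L.dropLast.getLast hdne, ?_, ?_, ?_, ?_⟩
    · -- E a u from chain'
      have hch : List.Chain' E L := hc
      rw [h1, h2] at hch
      have := (List.isChain_append.1 hch).2.2
      have h3 := this (L.dropLast.getLast hdne) (by
        rw [List.getLast?_append_of_ne_nil _ (by simp)]; simp) (L.getLast hne) (by simp)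
      rw [← hgl]; exact h3
    all_goals {
      have hre : L.dropLast.dropLast ++ [L.dropLast.getLast hdne, u] = L := by
        rw [show [L.dropLast.getLast hdne, u] = [L.dropLast.getLast hdne] ++ [u] by simp,
          ← List.append_assoc, ← h2, ← hgl]
        exact h1.symm
      rw [hre]
      first
        | exact hc
        | exact hnd
        | simp [hL]
    }

end Aux

/-- In a connected rooted digraph, every vertex `u ≠ r` that is not the
head of any cut-edge is the endpoint of two simple directed paths from `r` that end with
distinct final edges `(a₁,u)` and `(a₂,u)`. -/
theorem two_paths_distinct_last_edges {V : Type} [Fintype V] (E : V → V → Prop) (r : V)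
    (hroot : ∀ u, ¬ E u r) (hconn : Connected E r) (u : V) (hu : u ≠ r)
    (hnothead : ∀ x, ¬ IsCutEdge E r x u) :
    ∃ (l₁ l₂ : List V) (a₁ a₂ : V), a₁ ≠ a₂ ∧
      (l₁ ++ [a₁, u]).head? = some r ∧ List.Chain' E (l₁ ++ [a₁, u]) ∧
        (l₁ ++ [a₁, u]).Nodup ∧
      (l₂ ++ [a₂, u]).head? = some r ∧ List.Chain' E (l₂ ++ [a₂, u]) ∧
        (l₂ ++ [a₂, u]).Nodup := by
  have h1 := hconn u
  obtain ⟨l₁, a₁, ha₁u, hh1, hc1, hn1⟩ := exists_path h1 hu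
  have hreach : Reaches (delEdge E a₁ u) r u := by
    by_contra hcon
    exact hnothead a₁ ⟨ha₁u, u, hcon⟩
  obtain ⟨l₂, a₂, ha₂, hh2, hc2, hn2⟩ := exists_path hreach hu
  have hne : a₁ ≠ a₂ := fun h => ha₂.2 ⟨h.symm, rfl⟩
  exact ⟨l₁, l₂, a₁, a₂, hne, hh1, hc1, hn1, hh2,
    hc2.imp (fun a b hab => hab.1), hn2⟩

end OutBranching
end

section
/- Let D be a connected rooted digraph, let (u,v) be a cut-edge of D, and let D' be the rooted digraph obtained from D by contracting (u,v). Then maxleaf(D) ≥ maxleaf(D'). -/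
namespace OutBranching

variable {V : Type}

private lemma cmk_single_eq_iff {u v x y : V} :
    cmk (singleEdge u v) x = cmk (singleEdge u v) y ↔
      (x = y ∨ ((x = u ∨ x = v) ∧ (y = u ∨ y = v))) := by
  constructor
  · intro h
    have h' : Relation.EqvGen (singleEdge u v) x y := Quotient.exact h
    clear h
    induction h' with
    | rel a b hab => exact Or.inr ⟨Or.inl hab.1, Or.inr hab.2⟩
    | refl a => exact Or.inl rfl
    | symm a b _ ih => tauto
    | trans a b c _ _ ih1 ih2 =>
      rcases ih1 with rfl | ⟨ha, hb⟩
      · exact ih2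
      · rcases ih2 with rfl | ⟨hb2, hc⟩
        · exact Or.inr ⟨ha, hb⟩
        · exact Or.inr ⟨ha, hc⟩
  · rintro (rfl | ⟨hx, hy⟩)
    · rfl
    · apply Quotient.sound
      have huv : Relation.EqvGen (singleEdge u v) u v := Relation.EqvGen.rel _ _ ⟨rfl, rfl⟩
      show Relation.EqvGen (singleEdge u v) x y
      rcases hx with rfl | rfl <;> rcases hy with rfl | rfl
      · exact .refl _
      · exact huv
      · exact .symm _ _ huv
      · exact .refl _
private lemma lift_branching [Fintype V] (E : V → V → Prop) (r u v : V)
    (hroot : ∀ w, ¬ E w r) (hconn : Connected E r) (hcut : IsCutEdge E r u v)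
    (T' : CVert (singleEdge u v) → CVert (singleEdge u v) → Prop)
    (hT' : IsOutbranching (contractE E (singleEdge u v)) (cmk (singleEdge u v) r) T') :
    ∃ T : V → V → Prop, IsOutbranching E r T ∧ leafCount T' ≤ leafCount T := by
  classical
  set q : V → CVert (singleEdge u v) := cmk (singleEdge u v) with hqdef
  have hq : ∀ x y : V, q x = q y ↔ (x = y ∨ ((x = u ∨ x = v) ∧ (y = u ∨ y = v))) :=
    fun x y => cmk_single_eq_iff
  have hEuv : E u v := hcut.1
  have hvr : v ≠ r := fun h => hroot u (h ▸ hEuv)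
  have hqv : q v = q u := (hq v u).2 (Or.inr ⟨Or.inr rfl, Or.inl rfl⟩)
  -- u ≠ v
  have hne : u ≠ v := by
    intro huv
    obtain ⟨w, hw⟩ := hcut.2
    apply hw
    have hw' : Relation.ReflTransGen E r w := hconn w
    clear hw
    show Relation.ReflTransGen (delEdge E u v) r w
    induction hw' with
    | refl => exact Relation.ReflTransGen.refl
    | @tail b c hab hbc ih =>
      by_cases h : b = u ∧ c = v
      · have : b = c := by rw [h.1, h.2, huv]
        exact this ▸ ih
      · exact ih.tail ⟨hbc, h⟩
  -- v is unreachable after deleting the cut edge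
  have hvnr : ¬ Relation.ReflTransGen (delEdge E u v) r v := by
    intro hv
    obtain ⟨w, hw⟩ := hcut.2
    apply hw
    have hw' : Relation.ReflTransGen E r w := hconn w
    clear hw
    show Relation.ReflTransGen (delEdge E u v) r w
    induction hw' with
    | refl => exact Relation.ReflTransGen.refl
    | @tail b c hab hbc ih =>
      by_cases h : b = u ∧ c = v
      · exact h.2 ▸ hv
      · exact ih.tail ⟨hbc, h⟩
  -- construction of the parent of u (when u is not the root)
  have hx0 : ∃ a, u ≠ r → (E a u ∧ T' (q a) (q u)) := by
    by_cases hur : u = r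
    · exact ⟨r, fun h => absurd hur h⟩
    have hrnu : ¬ (r = u ∨ r = v) := by rintro (rfl | rfl) <;> [exact hur rfl; exact hvr rfl]
    have hmne : q u ≠ q r := by
      intro h
      rcases (hq u r).1 h with rfl | ⟨_, h2⟩
      · exact hur rfl
      · exact hrnu h2
    obtain ⟨Am, hAm, hAmu⟩ := hT'.indeg (q u) hmne
    obtain ⟨hAne, x, y, hxq, hyq, hxy⟩ := hT'.sub hAm
    have hxu : ¬ (x = u ∨ x = v) := by
      intro h
      apply hAne
      rw [← hxq]
      rcases h with rfl | rfl
      · rfl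
      · exact hqv
    have hxq2 : q x = Am := hxq
    rcases (hq y u).1 hyq with hy | ⟨hy1, _⟩
    · rw [hy] at hxy
      exact ⟨x, fun _ => ⟨hxy, by rw [hxq2]; exact hAm⟩⟩
    rcases hy1 with hy | hy
    · rw [hy] at hxy
      exact ⟨x, fun _ => ⟨hxy, by rw [hxq2]; exact hAm⟩⟩
    rw [hy] at hxy
    -- bad case: the witness edge enters at v; derive False
    exfalso
    have hxnu : x ≠ u := fun h => hxu (Or.inl h)
    have hxnr : ¬ Relation.ReflTransGen (delEdge E u v) r x :=
      fun h => hvnr (h.tail ⟨hxy, fun hc => hxnu hc.1⟩)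
    have hsplit : ∀ A, Relation.ReflTransGen T' (q r) A →
        Relation.ReflTransGen (fun A B => T' A B ∧ B ≠ q u) (q r) A ∨
          Relation.ReflTransGen T' (q u) A := by
      intro A h
      induction h with
      | refl => exact Or.inl Relation.ReflTransGen.refl
      | @tail A B h1 h2 ih =>
        rcases ih with ih | ih
        · by_cases hB : B = q u
          · exact Or.inr (hB ▸ Relation.ReflTransGen.refl)
          · exact Or.inl (ih.tail ⟨h2, hB⟩)
        · exact Or.inr (ih.tail h2)
    have hlift : ∀ A, Relation.ReflTransGen (fun A B => T' A B ∧ B ≠ q u) (q r) A →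
        A ≠ q u ∧ ∀ b, q b = A → Relation.ReflTransGen (delEdge E u v) r b := by
      intro A h
      induction h with
      | refl =>
        refine ⟨hmne.symm, ?_⟩
        intro b hb
        rcases (hq b r).1 hb with rfl | ⟨_, h2⟩
        · exact Relation.ReflTransGen.refl
        · exact absurd h2 hrnu
      | @tail A B h1 h2 ih =>
        refine ⟨h2.2, ?_⟩
        intro b hb
        obtain ⟨hne', x', y', hx', hy', hxy'⟩ := hT'.sub h2.1
        have hx'2 : q x' = A := hx'
        have hy'2 : q y' = B := hy'
        have hbuv : ¬ (b = u ∨ b = v) := by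
          rintro (rfl | rfl) <;> apply h2.2
          · exact hb.symm
          · rw [← hb]; exact hqv
        have hy'b : y' = b := by
          rcases (hq y' b).1 (hy'2.trans hb.symm) with h | ⟨_, h⟩
          · exact h
          · exact absurd h hbuv
        have hx'uv : ¬ (x' = u ∨ x' = v) := by
          intro hc
          apply ih.1
          rw [← hx'2]
          rcases hc with rfl | rfl
          · rfl
          · exact hqv
        exact (ih.2 x' hx'2).tail ⟨hy'b ▸ hxy', fun hc => hx'uv (Or.inl hc.1)⟩
    have hnotoR : ∀ A, A ≠ q r → ¬ Relation.ReflTransGen T' A (q r) := by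
      intro A hA h
      rcases h.cases_tail with h' | ⟨c, _, hc⟩
      · exact hA h'.symm
      · exact hT'.rootIndeg c hc
    rcases hsplit (q x) (hT'.reach (q x)) with h | hmx
    · exact hxnr ((hlift (q x) h).2 x rfl)
    · -- cycle: q u reaches q x and T' (q x) (q u)
      have hxm : T' (q x) (q u) := by rw [hxq2]; exact hAm
      have hnotC : ∀ A, Relation.ReflTransGen T' (q r) A →
          ¬ (Relation.ReflTransGen T' (q u) A ∧ Relation.ReflTransGen T' A (q u)) := by
        intro A h
        induction h with
        | refl => rintro ⟨h1, _⟩; exact hnotoR (q u) hmne h1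
        | @tail A B h1 h2 ih =>
          rintro ⟨hb1, hb2⟩
          have hBr : B ≠ q r := fun h => hT'.rootIndeg A (h ▸ h2)
          obtain ⟨P, hP, hPu⟩ := hT'.indeg B hBr
          by_cases hBm : B = q u
          · subst hBm
            have hA : A = q x := (hPu A h2).trans (hPu (q x) hxm).symm
            exact ih ⟨hA ▸ hmx, hA ▸ Relation.ReflTransGen.single hxm⟩
          · rcases hb1.cases_tail with h' | ⟨Y, hY1, hY2⟩
            · exact hBm h'
            · have hYA : Y = A := (hPu Y hY2).trans (hPu A h2).symm
              exact ih ⟨hYA ▸ hY1, (Relation.ReflTransGen.single h2).trans hb2⟩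
      exact hnotC (q x) (hT'.reach (q x)) ⟨hmx, Relation.ReflTransGen.single hxm⟩
  obtain ⟨x₀, hx₀⟩ := hx0
  -- parent-choice for ordinary vertices
  have hpickE : ∀ b, ∃ a, (¬ (b = u ∨ b = v) → q b ≠ q r → E a b ∧ T' (q a) (q b)) := by
    intro b
    by_cases h1 : b = u ∨ b = v
    · exact ⟨b, fun hc => absurd h1 hc⟩
    by_cases h2 : q b = q r
    · exact ⟨b, fun _ hc => absurd h2 hc⟩
    obtain ⟨A, hA, _⟩ := hT'.indeg (q b) h2
    obtain ⟨hne', x', y', hx', hy', hxy'⟩ := hT'.sub hA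
    have hx'2 : q x' = A := hx'
    have hy'2 : q y' = q b := hy'
    have hy'b : y' = b := by
      rcases (hq y' b).1 hy'2 with h | ⟨_, h⟩
      · exact h
      · exact absurd h h1
    exact ⟨x', fun _ _ => ⟨hy'b ▸ hxy', by rw [hx'2]; exact hA⟩⟩
  choose pick hpick using hpickE
  set T : V → V → Prop := fun a b =>
    (b = v ∧ a = u) ∨ (b = u ∧ u ≠ r ∧ a = x₀) ∨
      (¬ (b = u ∨ b = v) ∧ q b ≠ q r ∧ a = pick b) with hTdef
  have hTsub : ∀ ⦃a b⦄, T a b → E a b := by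
    rintro a b (⟨rfl, rfl⟩ | ⟨rfl, hur, rfl⟩ | ⟨h1, h2, rfl⟩)
    · exact hEuv
    · exact (hx₀ hur).1
    · exact (hpick b h1 h2).1
  have hTreach : ∀ A, Relation.ReflTransGen T' (q r) A →
      ∀ b, q b = A → Relation.ReflTransGen T r b := by
    intro A h
    induction h with
    | refl =>
      intro b hb
      rcases (hq b r).1 hb with rfl | ⟨hb1, hr1⟩
      · exact Relation.ReflTransGen.refl
      · rcases hr1 with hru | hrv
        · rcases hb1 with hbu | hbv
          · subst hbu
            rw [← hru]
          · subst hbv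
            rw [hru]
            exact Relation.ReflTransGen.single (Or.inl ⟨rfl, rfl⟩)
        · exact absurd hrv.symm hvr
    | @tail A B h1 h2 ih =>
      intro b hb
      have hBr : B ≠ q r := fun h => hT'.rootIndeg A (h ▸ h2)
      by_cases hbuv : b = u ∨ b = v
      · have hBm : B = q u := by
          rw [← hb]
          rcases hbuv with rfl | rfl
          · rfl
          · exact hqv
        have hur : u ≠ r := fun h => hBr (hBm.trans (congrArg q h))
        have hru : Relation.ReflTransGen T r u := by
          obtain ⟨hx1, hx2⟩ := hx₀ hur
          obtain ⟨P, hP, hPu⟩ := hT'.indeg B hBr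
          have e1 : q x₀ = A := (hPu _ (hBm ▸ hx2)).trans (hPu A h2).symm
          exact (ih x₀ e1).tail (Or.inr (Or.inl ⟨rfl, hur, rfl⟩))
        rcases hbuv with rfl | rfl
        · exact hru
        · exact hru.tail (Or.inl ⟨rfl, rfl⟩)
      · have hbq : q b ≠ q r := fun h => hBr (hb ▸ h)
        obtain ⟨hp1, hp2⟩ := hpick b hbuv hbq
        obtain ⟨P, hP, hPu⟩ := hT'.indeg B hBr
        have e1 : q (pick b) = A := (hPu _ (hb ▸ hp2)).trans (hPu A h2).symm
        exact (ih _ e1).tail (Or.inr (Or.inr ⟨hbuv, hbq, rfl⟩))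
  have hTindeg : ∀ b, b ≠ r → ∃! a, T a b := by
    intro b hbr
    by_cases hbv : b = v
    · subst hbv
      refine ⟨u, Or.inl ⟨rfl, rfl⟩, ?_⟩
      rintro a (⟨_, rfl⟩ | ⟨h, _⟩ | ⟨h, _⟩)
      · rfl
      · exact absurd h.symm hne
      · exact absurd (Or.inr rfl) h
    by_cases hbu : b = u
    · subst hbu
      have hur : b ≠ r := hbr
      refine ⟨x₀, Or.inr (Or.inl ⟨rfl, hur, rfl⟩), ?_⟩
      rintro a (⟨h, _⟩ | ⟨_, _, rfl⟩ | ⟨h, _⟩)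
      · exact absurd h hbv
      · rfl
      · exact absurd (Or.inl rfl) h
    · have hbuv : ¬ (b = u ∨ b = v) := by rintro (h | h) <;> [exact hbu h; exact hbv h]
      have hbq : q b ≠ q r := by
        intro h
        rcases (hq b r).1 h with rfl | ⟨h1, _⟩
        · exact hbr rfl
        · exact hbuv h1
      refine ⟨pick b, Or.inr (Or.inr ⟨hbuv, hbq, rfl⟩), ?_⟩
      rintro a (⟨h, _⟩ | ⟨h, _⟩ | ⟨_, _, rfl⟩)
      · exact absurd (Or.inr h) hbuv
      · exact absurd (Or.inl h) hbuv
      · rfl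
  have hTroot : ∀ a, ¬ T a r := by
    rintro a (⟨h, _⟩ | ⟨h, hur, _⟩ | ⟨_, h, _⟩)
    · exact hvr h.symm
    · exact hur h.symm
    · exact h rfl
  -- leaf counting
  obtain ⟨rep, hrep⟩ : ∃ rep : CVert (singleEdge u v) → V, ∀ A, q (rep A) = A := by
    have : ∀ A : CVert (singleEdge u v), ∃ a, q a = A := fun A => Quotient.exists_rep A
    exact ⟨fun A => (this A).choose, fun A => (this A).choose_spec⟩
  set f : CVert (singleEdge u v) → V := fun A => if A = q u then v else rep A with hfdef
  have hfm : f (q u) = v := by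
    rw [hfdef]
    exact if_pos rfl
  have hfn : ∀ A, A ≠ q u → f A = rep A := by
    intro A h
    rw [hfdef]
    exact if_neg h
  have hqf : ∀ A, q (f A) = A := by
    intro A
    by_cases h : A = q u
    · rw [h, hfm, hqv]
    · rw [hfn A h, hrep]
  have finj : Function.Injective f := by
    intro A B h
    rw [← hqf A, ← hqf B, h]
  have himg : ∀ A, (∀ B, ¬ T' A B) → ∀ c, ¬ T (f A) c := by
    intro A hA c hc
    rcases hc with ⟨hc1, h2⟩ | ⟨hc1, hur, h2⟩ | ⟨h1, hqc, h3⟩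
    · -- c = v, f A = u
      have hAm : A = q u := by rw [← hqf A, h2]
      rw [hAm, hfm] at h2
      exact hne h2.symm
    · -- c = u, f A = x₀
      have : q x₀ = A := by rw [← h2, hqf]
      exact hA (q u) (this ▸ (hx₀ hur).2)
    · have : q (pick c) = A := by rw [← h3, hqf]
      exact hA (q c) (this ▸ (hpick c h1 hqc).2)
  refine ⟨T, ⟨hTsub, fun w => hTreach (q w) (hT'.reach (q w)) w rfl, hTindeg, hTroot⟩, ?_⟩
  have hsub : f '' {A | ∀ B, ¬ T' A B} ⊆ {a | ∀ c, ¬ T a c} := by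
    rintro _ ⟨A, hA, rfl⟩
    exact himg A hA
  calc leafCount T' = (f '' {A | ∀ B, ¬ T' A B}).ncard :=
        (Set.ncard_image_of_injective _ finj).symm
    _ ≤ leafCount T := Set.ncard_le_ncard hsub (Set.toFinite _)

/-- Contracting a cut-edge `(u,v)` of a connected rooted digraph does not
increase the maximum number of leaves: `maxleaf(D) ≥ maxleaf(D')`. -/
theorem contract_cut_edge_maxleaf {V : Type} [Fintype V] (E : V → V → Prop) (r u v : V)
    (hroot : ∀ w, ¬ E w r) (hconn : Connected E r) (hcut : IsCutEdge E r u v) :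
    maxleaf (contractE E (singleEdge u v)) (cmk (singleEdge u v) r) ≤ maxleaf E r := by
  classical
  rw [maxleaf]
  apply csSup_le'
  rintro n ⟨T', hT', rfl⟩
  obtain ⟨T, hT, hle⟩ := lift_branching E r u v hroot hconn hcut T' hT'
  have hbdd : BddAbove {n | ∃ T : V → V → Prop, IsOutbranching E r T ∧ leafCount T = n} := by
    refine ⟨Fintype.card V, ?_⟩
    rintro k ⟨S, _, rfl⟩
    calc leafCount S ≤ (Set.univ : Set V).ncard :=
          Set.ncard_le_ncard (Set.subset_univ _) Set.finite_univ
      _ = Fintype.card V := by rw [Set.ncard_univ, Nat.card_eq_fintype_card]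
  exact le_trans hle (le_csSup hbdd ⟨T, hT, rfl⟩)

end OutBranching
end

section
/- Let D be a connected rooted digraph with a cut-edge (u,v) such that (v,u) ∈ E(D), and let D' be the digraph obtained from D by deleting the edge (v,u). Then a subdigraph T is an outbranching of D with at least k leaves if and only if T is an outbranching of D' with at least k leaves; in particular maxleaf(D) = maxleaf(D'). -/
namespace OutBranching

variable {V : Type}

/-- If `(u,v)` is a cut-edge and `(v,u) ∈ E(D)`, then deleting `(v,u)`
preserves outbranchings with at least `k` leaves (in both directions); in particular
`maxleaf(D) = maxleaf(D')`. -/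
theorem delete_reverse_of_cut_edge {V : Type} [Fintype V] (E : V → V → Prop) (r u v : V)
    (hroot : ∀ w, ¬ E w r) (hconn : Connected E r)
    (hcut : IsCutEdge E r u v) (hvu : E v u) :
    (∀ (k : ℕ) (T : V → V → Prop),
        (IsOutbranching E r T ∧ k ≤ leafCount T) ↔
          (IsOutbranching (delEdge E v u) r T ∧ k ≤ leafCount T)) ∧
      maxleaf E r = maxleaf (delEdge E v u) r := by
  obtain ⟨huv, w, hw⟩ := hcut
  -- v is not reachable from r once the cut-edge (u,v) is deleted
  have hvnr : ¬ Reaches (delEdge E u v) r v := by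
    intro hv
    apply hw
    have h : ∀ x, Reaches E r x → Reaches (delEdge E u v) r x := by
      intro x hx
      induction hx with
      | refl => exact Relation.ReflTransGen.refl
      | @tail b c _ h2 ih =>
        by_cases hc : b = u ∧ c = v
        · rw [hc.2]; exact hv
        · exact ih.tail ⟨h2, hc⟩
    exact h w (hconn w)
  -- an outbranching of E never contains the edge (v,u)
  have key : ∀ T : V → V → Prop, IsOutbranching E r T → ¬ T v u := by
    intro T hT hTvu
    have hur : u ≠ r := fun h => hT.rootIndeg v (h ▸ hTvu)
    have huniq := hT.indeg u hur
    have heq : ∀ z, T z u → z = v := fun z hz => huniq.unique hz hTvu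
    set T' : V → V → Prop := fun a b => T a b ∧ ¬(a = u ∧ b = v) with hT'def
    have lem : ∀ x, Reaches T r x →
        Relation.ReflTransGen T' r x ∨ Relation.ReflTransGen T' r v := by
      intro x hx
      induction hx with
      | refl => exact Or.inl Relation.ReflTransGen.refl
      | @tail b c _ h2 ih =>
        rcases ih with ih | ih
        · by_cases hc : b = u ∧ c = v
          · -- then b = u is reachable in T'; its only T-in-neighbor is v
            right
            rw [hc.1] at ih
            rcases ih.cases_tail with h | ⟨z, hz1, hz2⟩
            · exact absurd h hur
            · rw [heq z hz2.1] at hz1; exact hz1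
          · exact Or.inl (ih.tail ⟨h2, hc⟩)
        · exact Or.inr ih
    have hv' : Relation.ReflTransGen T' r v := by
      rcases lem v (hT.reach v) with h | h <;> exact h
    exact hvnr (Relation.ReflTransGen.mono (p := delEdge E u v) (fun a b hab => ⟨hT.sub hab.1, hab.2⟩) _ _ hv')
  have main : ∀ T : V → V → Prop,
      IsOutbranching E r T ↔ IsOutbranching (delEdge E v u) r T := by
    intro T
    constructor
    · intro hT
      refine ⟨fun a b h => ⟨hT.sub h, ?_⟩, hT.reach, hT.indeg, hT.rootIndeg⟩
      rintro ⟨rfl, rfl⟩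
      exact key T hT h
    · intro hT
      exact ⟨fun a b h => (hT.sub h).1, hT.reach, hT.indeg, hT.rootIndeg⟩
  refine ⟨fun k T => by rw [main T], ?_⟩
  unfold maxleaf
  congr 1
  ext n
  constructor <;> rintro ⟨T, hT, hn⟩
  · exact ⟨T, (main T).mp hT, hn⟩
  · exact ⟨T, (main T).mpr hT, hn⟩

end OutBranching
end

section
/- Let D be a connected rooted digraph containing two cut-edges (x_1,y_1) and (x_2,y_2) such that both (x_1,x_2) and (x_2,x_1) are edges of D, and let D' be the rooted digraph obtained from D by contracting the edge (x_1,x_2). Then maxleaf(D) = maxleaf(D'); in particular, for every integer k, D has an outbranching with at least k leaves if and only if D' does. -/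
namespace OutBranching

variable {V : Type}

/-! ### Auxiliary lemmas -/

section Aux

variable {E T : V → V → Prop} {r : V}

lemma reaches_mono (h : ∀ ⦃a b⦄, T a b → E a b) {a b : V}
    (hr : Reaches T a b) : Reaches E a b := Relation.ReflTransGen.mono h _ _ hr

lemma not_reaches_of_closed (C : Set V) (hr : r ∉ C)
    (hcl : ∀ v ∈ C, ∀ u, T u v → u ∈ C) {v : V} (hv : v ∈ C) : ¬ Reaches T r v := by
  intro h
  revert hv
  induction h with
  | refl => exact fun hv => hr hv
  | tail _ hstep ih => exact fun hv => ih (hcl _ hv _ hstep)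

lemma reach_pred {p v u : V} (h : Reaches T p v) (hne : p ≠ v)
    (huniq : ∀ w, T w v → w = u) : Reaches T p u := by
  rcases Relation.ReflTransGen.cases_tail h with h' | ⟨b, hb, hbv⟩
  · exact absurd h'.symm hne
  · exact (huniq b hbv) ▸ hb

lemma IsOutbranching.reaches_root_eq (hT : IsOutbranching E r T) {a : V}
    (h : Reaches T a r) : a = r := by
  rcases Relation.ReflTransGen.cases_tail h with h' | ⟨b, _, hbr⟩
  · exact h'.symm
  · exact absurd hbr (hT.rootIndeg b)

lemma IsOutbranching.not_self (hT : IsOutbranching E r T) (v : V) : ¬ T v v := by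
  intro h
  have hvr : v ≠ r := fun e => hT.rootIndeg v (e ▸ h)
  refine not_reaches_of_closed {v} (by simpa using (Ne.symm hvr)) ?_ rfl (hT.reach v)
  rintro x hx u hu
  rcases hT.indeg v hvr with ⟨w, _, huniq⟩
  simp only [Set.mem_singleton_iff] at hx ⊢
  rw [hx] at hu
  exact (huniq u hu).trans (huniq v h).symm

lemma IsOutbranching.reach_antisymm (hT : IsOutbranching E r T) {a b : V}
    (hab : Reaches T a b) (hba : Reaches T b a) : a = b := by
  by_contra hne
  have har : a ≠ r := by
    rintro rfl
    exact hne (hT.reaches_root_eq hba).symm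
  have hC : a ∈ {v | Reaches T a v ∧ Reaches T v a} := ⟨.refl, .refl⟩
  refine not_reaches_of_closed _ ?_ ?_ hC (hT.reach a)
  · rintro ⟨h1, -⟩
    exact har (hT.reaches_root_eq h1)
  · rintro v ⟨h1, h2⟩ u hu
    have hvr : v ≠ r := fun e => hT.rootIndeg u (e ▸ hu)
    rcases hT.indeg v hvr with ⟨w, hw, huniq⟩
    have huniq' : ∀ w', T w' v → w' = u := fun w' h' => (huniq w' h').trans (huniq u hu).symm
    constructor
    · by_cases hav : a = v
      · subst hav
        exact hab.trans (reach_pred hba (Ne.symm hne) huniq')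
      · exact reach_pred h1 hav huniq'
    · exact (Relation.ReflTransGen.single hu).trans h2

lemma IsOutbranching.contains_cutEdge (hT : IsOutbranching E r T) {u v : V}
    (h : IsCutEdge E r u v) : T u v := by
  by_contra hno
  obtain ⟨he, w, hw⟩ := h
  exact hw (reaches_mono (fun a b hab =>
    ⟨hT.sub hab, fun ⟨ea, eb⟩ => hno (ea ▸ eb ▸ hab)⟩) (hT.reach w))

lemma reaches_delEdge_self {u a b : V} (h : Reaches E a b) :
    Reaches (delEdge E u u) a b := by
  induction h with
  | refl => exact .refl
  | @tail b c _ hstep ih =>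
    by_cases hc : b = u ∧ c = u
    · obtain ⟨rfl, rfl⟩ := hc
      exact ih
    · exact ih.tail ⟨hstep, hc⟩

lemma IsCutEdge.ne (hconn : Connected E r) {u v : V} (h : IsCutEdge E r u v) : u ≠ v := by
  rintro rfl
  obtain ⟨-, w, hw⟩ := h
  exact hw (reaches_delEdge_self (hconn w))

end Aux

/-! ### Quotient lemmas for contracting a single edge -/

section Quot

variable {x₁ x₂ : V}

lemma eqvGen_singleEdge {a b : V} (h : Relation.EqvGen (singleEdge x₁ x₂) a b) :
    a = b ∨ ((a = x₁ ∨ a = x₂) ∧ (b = x₁ ∨ b = x₂)) := by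
  induction h with
  | rel a b h => exact Or.inr ⟨Or.inl h.1, Or.inr h.2⟩
  | refl => exact Or.inl rfl
  | symm a b _ ih => tauto
  | trans a b c _ _ ih1 ih2 =>
    rcases ih1 with rfl | ⟨h1, h2⟩
    · exact ih2
    · rcases ih2 with rfl | ⟨h3, h4⟩
      · exact Or.inr ⟨h1, h2⟩
      · exact Or.inr ⟨h1, h4⟩

lemma cmk_eq_iff {a b : V} :
    cmk (singleEdge x₁ x₂) a = cmk (singleEdge x₁ x₂) b ↔
      a = b ∨ ((a = x₁ ∨ a = x₂) ∧ (b = x₁ ∨ b = x₂)) := by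
  constructor
  · intro h
    exact eqvGen_singleEdge (Quotient.exact h)
  · rintro (rfl | ⟨ha, hb⟩)
    · rfl
    · refine Quotient.sound ?_
      rcases ha with rfl | rfl <;> rcases hb with h | h <;> rw [h] <;>
        first
          | exact Relation.EqvGen.refl _
          | exact Relation.EqvGen.rel _ _ ⟨rfl, rfl⟩
          | exact Relation.EqvGen.symm _ _ (Relation.EqvGen.rel _ _ ⟨rfl, rfl⟩)

lemma cmk_surjective (C : V → V → Prop) : Function.Surjective (cmk C) :=
  fun q => Quotient.exists_rep q

end Quot

/-! ### Existence of an outbranching in a connected rooted digraph -/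

section Exists

variable (E : V → V → Prop) (r : V)

/-- Vertices reachable from `r` in at most `n` steps. -/
def reachSet : ℕ → Set V
  | 0 => {r}
  | n + 1 => reachSet n ∪ {v | ∃ u ∈ reachSet n, E u v}

variable {E r}

lemma reachSet_of_reaches {v : V} (h : Reaches E r v) : ∃ n, v ∈ reachSet E r n := by
  induction h with
  | refl => exact ⟨0, rfl⟩
  | tail _ hstep ih =>
    obtain ⟨n, hn⟩ := ih
    exact ⟨n + 1, Or.inr ⟨_, hn, hstep⟩⟩

lemma exists_parent_of_conn (hconn : Connected E r) {v : V} (hv : v ≠ r) :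
    ∃ u, E u v ∧
      sInf {n | u ∈ reachSet E r n} < sInf {n | v ∈ reachSet E r n} := by
  have hne : {n | v ∈ reachSet E r n}.Nonempty := reachSet_of_reaches (hconn v)
  have hmem := Nat.sInf_mem hne
  rcases h0 : sInf {n | v ∈ reachSet E r n} with _ | k
  · rw [h0] at hmem
    exact absurd hmem hv
  · rw [h0] at hmem
    rcases hmem with h | ⟨u, hu, huv⟩
    · exact absurd (Nat.sInf_le (show k ∈ {n | v ∈ reachSet E r n} from h)) (by omega)
    · have h' : k ∈ {n | u ∈ reachSet E r n} := hu
      exact ⟨u, huv, by have := Nat.sInf_le h'; omega⟩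

lemma exists_outbranching (hroot : ∀ w, ¬ E w r) (hconn : Connected E r) :
    ∃ T, IsOutbranching E r T := by
  classical
  have key : ∀ v, v ≠ r → ∃ u, E u v ∧
      sInf {n | u ∈ reachSet E r n} < sInf {n | v ∈ reachSet E r n} :=
    fun v hv => exists_parent_of_conn hconn hv
  refine ⟨fun u v => ∃ h : v ≠ r, u = (key v h).choose, ?_, ?_, ?_, ?_⟩
  · rintro a b ⟨h, rfl⟩
    exact (key b h).choose_spec.1
  · have H : ∀ d v, sInf {n | v ∈ reachSet E r n} ≤ d →
        Reaches (fun u v => ∃ h : v ≠ r, u = (key v h).choose) r v := by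
      intro d
      induction d with
      | zero =>
        intro v hv
        by_cases hr' : v = r
        · subst hr'
          exact Relation.ReflTransGen.refl
        · obtain ⟨-, hlt⟩ := (key v hr').choose_spec
          exact absurd hlt (by omega)
      | succ d ih =>
        intro v hv
        by_cases hr' : v = r
        · subst hr'
          exact Relation.ReflTransGen.refl
        · obtain ⟨-, hlt⟩ := (key v hr').choose_spec
          refine Relation.ReflTransGen.tail (ih ((key v hr').choose) ?_) ⟨hr', rfl⟩
          omega
    intro v
    exact H _ v le_rfl
  · intro v hv
    exact ⟨(key v hv).choose, ⟨hv, rfl⟩, fun u hu => hu.choose_spec⟩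
  · rintro u ⟨h, -⟩
    exact h rfl

end Exists

/-! ### Rerouting -/

section Reroute

variable [Fintype V] {E T : V → V → Prop} {r : V}

lemma reroute (hT : IsOutbranching E r T) {a b : V} (e : E a b) (hbr : b ≠ r)
    (hnab : ¬ Reaches T b a) (hal : ∃ c, T a c) :
    ∃ T₀, IsOutbranching E r T₀ ∧ leafCount T ≤ leafCount T₀ ∧ T₀ a b := by
  classical
  refine ⟨fun u v => (T u v ∧ v ≠ b) ∨ (u = a ∧ v = b), ⟨?_, ?_, ?_, ?_⟩, ?_, Or.inr ⟨rfl, rfl⟩⟩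
  · rintro u v (⟨h, -⟩ | ⟨rfl, rfl⟩)
    · exact hT.sub h
    · exact e
  · have hreach1 : ∀ w, Reaches T r w → ¬ Reaches T b w →
        Reaches (fun u v => (T u v ∧ v ≠ b) ∨ (u = a ∧ v = b)) r w := by
      intro w hw
      induction hw with
      | refl => exact fun _ => .refl
      | @tail p q hp hstep ih =>
        intro hnb
        have hq : q ≠ b := by rintro rfl; exact hnb Relation.ReflTransGen.refl
        have hnbp : ¬ Reaches T b p := fun hh => hnb (hh.tail hstep)
        exact (ih hnbp).tail (Or.inl ⟨hstep, hq⟩)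
    have hra : Reaches (fun u v => (T u v ∧ v ≠ b) ∨ (u = a ∧ v = b)) r a :=
      hreach1 a (hT.reach a) hnab
    have hrb : Reaches (fun u v => (T u v ∧ v ≠ b) ∨ (u = a ∧ v = b)) r b :=
      hra.tail (Or.inr ⟨rfl, rfl⟩)
    intro v
    have hv := hT.reach v
    induction hv with
    | refl => exact .refl
    | @tail p q hp hstep ih =>
      by_cases hq : q = b
      · subst hq; exact hrb
      · exact ih.tail (Or.inl ⟨hstep, hq⟩)
  · intro v hv
    by_cases hvb : v = b
    · subst hvb
      refine ⟨a, Or.inr ⟨rfl, rfl⟩, ?_⟩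
      rintro u (⟨-, h⟩ | ⟨rfl, -⟩)
      · exact absurd rfl h
      · rfl
    · obtain ⟨u₀, hu₀, huniq⟩ := hT.indeg v hv
      refine ⟨u₀, Or.inl ⟨hu₀, hvb⟩, ?_⟩
      rintro u (⟨h, -⟩ | ⟨-, rfl⟩)
      · exact huniq u h
      · exact absurd rfl hvb
  · rintro u (⟨h, -⟩ | ⟨-, h⟩)
    · exact hT.rootIndeg u h
    · exact hbr h.symm
  · refine Set.ncard_le_ncard ?_ (Set.toFinite _)
    intro v hv w
    rintro (⟨h, -⟩ | ⟨rfl, -⟩)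
    · exact hv w h
    · obtain ⟨c, hc⟩ := hal
      exact hv c hc

end Reroute

/-! ### Contraction direction: from an outbranching of `D` to one of `D'` -/

section Contract

variable [Fintype V] {E T₀ : V → V → Prop} {r x₁ x₂ : V}

lemma contract_direction (hT : IsOutbranching E r T₀) {a b : V}
    (hpair : (a = x₁ ∧ b = x₂) ∨ (a = x₂ ∧ b = x₁))
    (hab : T₀ a b) (hne : x₁ ≠ x₂) (h1r : x₁ ≠ r) (h2r : x₂ ≠ r)
    (hbl : ∃ y, T₀ b y ∧ y ≠ x₁ ∧ y ≠ x₂) :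
    ∃ T', IsOutbranching (contractE E (singleEdge x₁ x₂)) (cmk (singleEdge x₁ x₂) r) T' ∧
      leafCount T₀ ≤ leafCount T' := by
  classical
  haveI : Finite (CVert (singleEdge x₁ x₂)) := Quotient.finite _
  set π : V → CVert (singleEdge x₁ x₂) := cmk (singleEdge x₁ x₂) with hπ
  have char : ∀ u v : V, π u = π v ↔ u = v ∨ ((u = x₁ ∨ u = x₂) ∧ (v = x₁ ∨ v = x₂)) :=
    fun u v => cmk_eq_iff
  have hmem : ∀ c : V, (c = a ∨ c = b) ↔ (c = x₁ ∨ c = x₂) := by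
    rcases hpair with ⟨rfl, rfl⟩ | ⟨rfl, rfl⟩ <;> tauto
  have hanb : a ≠ b := by
    rcases hpair with ⟨rfl, rfl⟩ | ⟨rfl, rfl⟩
    · exact hne
    · exact hne.symm
  have har : a ≠ r := by
    rcases hpair with ⟨rfl, -⟩ | ⟨rfl, -⟩
    · exact h1r
    · exact h2r
  have hbr : b ≠ r := by
    rcases hpair with ⟨-, rfl⟩ | ⟨-, rfl⟩
    · exact h2r
    · exact h1r
  have hπr : ∀ u, π u = π r → u = r := by
    intro u h
    rcases (char u r).mp h with h' | ⟨-, h' | h'⟩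
    · exact h'
    · exact absurd h'.symm h1r
    · exact absurd h'.symm h2r
  have hπab : π a = π b := (char a b).mpr (Or.inr ⟨(hmem a).mp (Or.inl rfl),
    (hmem b).mp (Or.inr rfl)⟩)
  have hnotleaf : ∀ v : V, (v = x₁ ∨ v = x₂) → ∃ w, T₀ v w := by
    intro v hv
    rcases (hmem v).mpr hv with rfl | rfl
    · exact ⟨b, hab⟩
    · obtain ⟨y, hy, -, -⟩ := hbl
      exact ⟨y, hy⟩
  refine ⟨fun p q => p ≠ q ∧ ∃ u v, π u = p ∧ π v = q ∧ T₀ u v, ⟨?_, ?_, ?_, ?_⟩, ?_⟩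
  · rintro p q ⟨hpq, u, v, hu, hv, huv⟩
    exact ⟨hpq, u, v, hu, hv, hT.sub huv⟩
  · have himg : ∀ u v : V, Reaches T₀ u v →
        Reaches (fun p q => p ≠ q ∧ ∃ u v, π u = p ∧ π v = q ∧ T₀ u v) (π u) (π v) := by
      intro u v h
      induction h with
      | refl => exact .refl
      | @tail p q hp hstep ih =>
        by_cases hpq : π p = π q
        · rw [hpq] at ih
          exact ih
        · exact ih.tail ⟨hpq, p, q, rfl, rfl, hstep⟩
    intro q
    obtain ⟨v, rfl⟩ := cmk_surjective (singleEdge x₁ x₂) q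
    exact himg r v (hT.reach v)
  · intro q hq
    by_cases hz : q = π a
    · subst hz
      obtain ⟨p₁, hp₁, hp₁u⟩ := hT.indeg a har
      have hp₁pair : ¬ (p₁ = x₁ ∨ p₁ = x₂) := by
        intro h
        rcases (hmem p₁).mpr h with h' | h'
        · rw [h'] at hp₁
          exact hT.not_self a hp₁
        · rw [h'] at hp₁
          exact hanb (hT.reach_antisymm (Relation.ReflTransGen.single hab)
            (Relation.ReflTransGen.single hp₁))
      have hp₁a : π p₁ ≠ π a := by
        intro h
        rcases (char p₁ a).mp h with h' | ⟨h', -⟩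
        · rw [h'] at hp₁
          exact hT.not_self a hp₁
        · exact hp₁pair h'
      refine ⟨π p₁, ⟨hp₁a, p₁, a, rfl, rfl, hp₁⟩, ?_⟩
      rintro p ⟨hpq, u, v, hu, hv, huv⟩
      have hv' : v = a ∨ v = b := by
        rcases (char v a).mp hv with h' | ⟨h', -⟩
        · exact Or.inl h'
        · exact (hmem v).mpr h'
      rcases hv' with h' | h'
      · rw [h'] at huv
        rw [← hu, hp₁u u huv]
      · rw [h'] at huv
        exfalso
        obtain ⟨pb, hpb, hpbu⟩ := hT.indeg b hbr
        have hua : u = a := (hpbu u huv).trans (hpbu a hab).symm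
        exact hpq (by rw [← hu, hua])
    · obtain ⟨v₀, rfl⟩ := cmk_surjective (singleEdge x₁ x₂) q
      have hv₀pair : ¬ (v₀ = x₁ ∨ v₀ = x₂) := by
        intro h
        exact hz ((char v₀ a).mpr (Or.inr ⟨h, (hmem a).mp (Or.inl rfl)⟩))
      have hv₀r : v₀ ≠ r := fun h => hq (by rw [h])
      obtain ⟨u₀, hu₀, huniq⟩ := hT.indeg v₀ hv₀r
      have hu₀v₀ : π u₀ ≠ π v₀ := by
        intro h
        rcases (char u₀ v₀).mp h with h' | ⟨-, h'⟩
        · rw [h'] at hu₀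
          exact hT.not_self v₀ hu₀
        · exact hv₀pair h'
      refine ⟨π u₀, ⟨hu₀v₀, u₀, v₀, rfl, rfl, hu₀⟩, ?_⟩
      rintro p ⟨hpq, u, v, hu, hv, huv⟩
      have hvv : v = v₀ := by
        rcases (char v v₀).mp hv with h' | ⟨-, h'⟩
        · exact h'
        · exact absurd h' hv₀pair
      rw [hvv] at huv
      rw [← hu, huniq u huv]
  · rintro p ⟨hpq, u, v, hu, hv, huv⟩
    have : v = r := hπr v hv
    subst this
    exact hT.rootIndeg u huv
  · have hlfpair : ∀ v : V, (∀ w, ¬ T₀ v w) → ¬ (v = x₁ ∨ v = x₂) := by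
      intro v hv h
      obtain ⟨w, hw⟩ := hnotleaf v h
      exact hv w hw
    refine Set.ncard_le_ncard_of_injOn π ?_ ?_ (Set.toFinite _)
    · rintro v hv q' ⟨hne', u, w', hu, hw', huw⟩
      have huv' : u = v := by
        rcases (char u v).mp hu with h' | ⟨h', h''⟩
        · exact h'
        · exact absurd h'' (hlfpair v hv)
      rw [huv'] at huw
      exact hv w' huw
    · intro v hv v' hv' h
      rcases (char v v').mp h with h' | ⟨h', -⟩
      · exact h'
      · exact absurd h' (hlfpair v hv)

end Contract

/-! ### Lift direction: from an outbranching of `D'` to one of `D` -/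

section Lift

variable [Fintype V] {E : V → V → Prop} {r x₁ x₂ : V}

lemma lift_aux {c d : V}
    (hpr : ∀ t : V, (t = c ∨ t = d) ↔ (t = x₁ ∨ t = x₂))
    (ecd : E c d) (hcd : c ≠ d) (hcr : c ≠ r) (hdr : d ≠ r) (hrr : r ≠ x₁ ∧ r ≠ x₂)
    {T' : CVert (singleEdge x₁ x₂) → CVert (singleEdge x₁ x₂) → Prop}
    (hT' : IsOutbranching (contractE E (singleEdge x₁ x₂)) (cmk (singleEdge x₁ x₂) r) T')
    {w : V} (hwp : ¬ (w = x₁ ∨ w = x₂)) (hwc : E w c)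
    (hTp : T' (cmk (singleEdge x₁ x₂) w) (cmk (singleEdge x₁ x₂) c))
    (hTpu : ∀ p, T' p (cmk (singleEdge x₁ x₂) c) → p = cmk (singleEdge x₁ x₂) w) :
    ∃ T, IsOutbranching E r T ∧ leafCount T' ≤ leafCount T := by
  classical
  set π : V → CVert (singleEdge x₁ x₂) := cmk (singleEdge x₁ x₂) with hπdef
  have char : ∀ u v : V, π u = π v ↔ u = v ∨ ((u = x₁ ∨ u = x₂) ∧ (v = x₁ ∨ v = x₂)) :=
    fun u v => cmk_eq_iff
  have hcp : c = x₁ ∨ c = x₂ := (hpr c).mp (Or.inl rfl)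
  have hdp : d = x₁ ∨ d = x₂ := (hpr d).mp (Or.inr rfl)
  have hπcd : π c = π d := (char c d).mpr (Or.inr ⟨hcp, hdp⟩)
  have hπr : ∀ u : V, π u = π r → u = r := by
    intro u h
    rcases (char u r).mp h with h' | ⟨-, h'⟩
    · exact h'
    · rcases h' with h' | h'
      · exact absurd h' hrr.1
      · exact absurd h' hrr.2
  have hπr' : ∀ u : V, ¬(u = x₁ ∨ u = x₂) → u ≠ r → π u ≠ π r := by
    intro u hu hur h
    exact hur (hπr u h)
  have key : ∀ n, ¬ (n = x₁ ∨ n = x₂) → n ≠ r →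
      ∃ m, E m n ∧ T' (π m) (π n) ∧ ∀ p, T' p (π n) → p = π m := by
    intro n hnp hnr
    obtain ⟨p', hp', hu'⟩ := hT'.indeg (π n) (hπr' n hnp hnr)
    obtain ⟨hne', u₀, v₀, hu₀, hv₀, huv₀⟩ := hT'.sub hp'
    have hv₀n : v₀ = n := by
      rcases (char v₀ n).mp hv₀ with h' | ⟨-, h'⟩
      · exact h'
      · exact absurd h' hnp
    rw [hv₀n] at huv₀
    refine ⟨u₀, huv₀, ?_, ?_⟩
    · have h'' := hp'
      rw [← hu₀] at h''
      exact h''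
    · intro p hp
      exact (hu' p hp).trans hu₀.symm
  refine ⟨fun m n => (m = w ∧ n = c) ∨ (m = c ∧ n = d) ∨
      ∃ (h1 : ¬ (n = x₁ ∨ n = x₂)) (h2 : n ≠ r), m = (key n h1 h2).choose,
    ⟨?_, ?_, ?_, ?_⟩, ?_⟩
  · rintro m n (⟨rfl, rfl⟩ | ⟨rfl, rfl⟩ | ⟨h1, h2, rfl⟩)
    · exact hwc
    · exact ecd
    · exact (key n h1 h2).choose_spec.1
  · have hR : ∀ q, Reaches T' (π r) q → ∀ n, π n = q →
        Reaches (fun m n => (m = w ∧ n = c) ∨ (m = c ∧ n = d) ∨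
          ∃ (h1 : ¬ (n = x₁ ∨ n = x₂)) (h2 : n ≠ r), m = (key n h1 h2).choose) r n := by
      intro q hq
      induction hq with
      | refl =>
        intro n hn
        rw [hπr n hn]
        exact Relation.ReflTransGen.refl
      | @tail p q' hp hstep ih =>
        intro n hn
        by_cases hnp : n = x₁ ∨ n = x₂
        · have hq'c : q' = π c := by
            rw [← hn]
            exact (char n c).mpr (Or.inr ⟨hnp, hcp⟩)
          rw [hq'c] at hstep
          have hpw : p = π w := hTpu p hstep
          have hrw : Reaches _ r w := ih w hpw.symm
          have hrc := hrw.tail (Or.inl ⟨rfl, rfl⟩)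
          rcases (hpr n).mpr hnp with rfl | rfl
          · exact hrc
          · exact hrc.tail (Or.inr (Or.inl ⟨rfl, rfl⟩))
        · have hnr : n ≠ r := by
            rintro rfl
            rw [← hn] at hstep
            exact hT'.rootIndeg p hstep
          obtain ⟨hE, hT'm, huni⟩ := (key n hnp hnr).choose_spec
          have hpm : p = π (key n hnp hnr).choose := by
            apply huni
            rw [hn]
            exact hstep
          have hrm := ih _ hpm.symm
          exact hrm.tail (Or.inr (Or.inr ⟨hnp, hnr, rfl⟩))
    intro n
    exact hR (π n) (hT'.reach (π n)) n rfl
  · intro n hnr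
    by_cases hnc : n = c
    · subst hnc
      refine ⟨w, Or.inl ⟨rfl, rfl⟩, ?_⟩
      rintro m (⟨rfl, -⟩ | ⟨-, h⟩ | ⟨h1, -, -⟩)
      · rfl
      · exact absurd h hcd
      · exact absurd hcp h1
    · by_cases hnd : n = d
      · subst hnd
        refine ⟨c, Or.inr (Or.inl ⟨rfl, rfl⟩), ?_⟩
        rintro m (⟨-, h⟩ | ⟨rfl, -⟩ | ⟨h1, -, -⟩)
        · exact absurd h hnc
        · rfl
        · exact absurd hdp h1
      · have hnp : ¬ (n = x₁ ∨ n = x₂) := by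
          intro h
          rcases (hpr n).mpr h with h' | h'
          · exact hnc h'
          · exact hnd h'
        refine ⟨(key n hnp hnr).choose, Or.inr (Or.inr ⟨hnp, hnr, rfl⟩), ?_⟩
        rintro m (⟨-, h⟩ | ⟨-, h⟩ | ⟨h1, h2, rfl⟩)
        · exact absurd h hnc
        · exact absurd h hnd
        · rfl
  · rintro m (⟨-, h⟩ | ⟨-, h⟩ | ⟨-, h2, -⟩)
    · exact hcr h.symm
    · exact hdr h.symm
    · exact h2 rfl
  · haveI : Finite (CVert (singleEdge x₁ x₂)) := Quotient.finite _
    have houtq : ∀ q : CVert (singleEdge x₁ x₂), π (Quotient.out q) = q :=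
      fun q => Quotient.out_eq q
    have houtnp : ∀ q : CVert (singleEdge x₁ x₂), q ≠ π c →
        ¬ ((Quotient.out q : V) = x₁ ∨ (Quotient.out q : V) = x₂) := by
      intro q hq h
      exact hq (by rw [← houtq q]; exact (char _ c).mpr (Or.inr ⟨h, hcp⟩))
    refine Set.ncard_le_ncard_of_injOn
      (fun q => if q = π c then d else Quotient.out q) ?_ ?_ (Set.toFinite _)
    · intro q hq
      simp only [Set.mem_setOf_eq] at hq ⊢
      by_cases hqc : q = π c
      · rw [if_pos hqc]
        intro m hm
        rcases hm with ⟨h, -⟩ | ⟨h, -⟩ | ⟨h1, h2, hm'⟩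
        · exact hwp (h ▸ hdp)
        · exact hcd h.symm
        · obtain ⟨-, hTm, -⟩ := (key m h1 h2).choose_spec
          rw [← hm', ← hπcd, ← hqc] at hTm
          exact hq _ hTm
      · rw [if_neg hqc]
        intro m hm
        rcases hm with ⟨h, -⟩ | ⟨h, -⟩ | ⟨h1, h2, hm'⟩
        · have hqw : q = π w := by rw [← houtq q, h]
          rw [hqw] at hq
          exact hq _ hTp
        · exact houtnp q hqc (h ▸ hcp)
        · obtain ⟨-, hTm, -⟩ := (key m h1 h2).choose_spec
          rw [← hm', houtq q] at hTm
          exact hq _ hTm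
    · intro q hq q' hq' h
      simp only at h
      by_cases hqc : q = π c <;> by_cases hq'c : q' = π c
      · rw [hqc, hq'c]
      · exfalso
        rw [if_pos hqc, if_neg hq'c] at h
        exact houtnp q' hq'c (h ▸ hdp)
      · exfalso
        rw [if_neg hqc, if_pos hq'c] at h
        exact houtnp q hqc (h.symm ▸ hdp)
      · rw [if_neg hqc, if_neg hq'c] at h
        rw [← houtq q, ← houtq q', h]

lemma lift_direction (e₁₂ : E x₁ x₂) (e₂₁ : E x₂ x₁) (hne : x₁ ≠ x₂)
    (h1r : x₁ ≠ r) (h2r : x₂ ≠ r)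
    {T' : CVert (singleEdge x₁ x₂) → CVert (singleEdge x₁ x₂) → Prop}
    (hT' : IsOutbranching (contractE E (singleEdge x₁ x₂)) (cmk (singleEdge x₁ x₂) r) T') :
    ∃ T, IsOutbranching E r T ∧ leafCount T' ≤ leafCount T := by
  classical
  set π : V → CVert (singleEdge x₁ x₂) := cmk (singleEdge x₁ x₂) with hπdef
  have char : ∀ u v : V, π u = π v ↔ u = v ∨ ((u = x₁ ∨ u = x₂) ∧ (v = x₁ ∨ v = x₂)) :=
    fun u v => cmk_eq_iff
  have hrr : r ≠ x₁ ∧ r ≠ x₂ := ⟨fun h => h1r h.symm, fun h => h2r h.symm⟩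
  have hzr : π x₁ ≠ π r := by
    intro h
    rcases (char x₁ r).mp h with h' | ⟨-, h'⟩
    · exact h1r h'
    · rcases h' with h' | h'
      · exact h1r h'.symm
      · exact h2r h'.symm
  obtain ⟨p₀, hp₀, hp₀u⟩ := hT'.indeg (π x₁) hzr
  obtain ⟨hnpz, u, v, hu, hv, huv⟩ := hT'.sub hp₀
  have hup : ¬ (u = x₁ ∨ u = x₂) := by
    intro h
    apply hnpz
    rw [← hu, ← hv]
    exact (char u v).mpr (Or.inr ⟨h, by
      rcases (char v x₁).mp hv with h' | ⟨h', -⟩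
      · exact Or.inl h'
      · exact h'⟩)
  have hvp : v = x₁ ∨ v = x₂ := by
    rcases (char v x₁).mp hv with h' | ⟨h', -⟩
    · exact Or.inl h'
    · exact h'
  have hTp : T' (π u) (π v) := by
    have h'' := hp₀
    rw [← hu, ← hv] at h''
    exact h''
  have hTpu : ∀ p, T' p (π v) → p = π u := by
    intro p hp
    have hp' : T' p (π x₁) := by
      rw [← hv]
      exact hp
    exact (hp₀u p hp').trans hu.symm
  rcases hvp with h' | h'
  · subst h'
    exact lift_aux (d := x₂) (by tauto) e₁₂ hne h1r h2r ⟨fun h => h1r h.symm, fun h => h2r h.symm⟩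
      hT' hup huv hTp hTpu
  · subst h'
    exact lift_aux (d := x₁) (by tauto) e₂₁ hne.symm h2r h1r
      ⟨fun h => h1r h.symm, fun h => h2r h.symm⟩ hT' hup huv hTp hTpu

end Lift

/-! ### The degenerate case `x₁ = x₂` -/

section Iso

variable [Fintype V] {E : V → V → Prop} {r x₁ : V}

omit [Fintype V] in
lemma cmk_inj_self : Function.Injective (cmk (singleEdge x₁ x₁) : V → CVert (singleEdge x₁ x₁)) := by
  intro u v h
  rcases (cmk_eq_iff (x₁ := x₁) (x₂ := x₁)).mp h with h' | ⟨h1 | h1, h2 | h2⟩ <;>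
    first
      | exact h'
      | (rw [h1, h2])

lemma iso_d1 {T : V → V → Prop} (hT : IsOutbranching E r T) :
    ∃ T', IsOutbranching (contractE E (singleEdge x₁ x₁)) (cmk (singleEdge x₁ x₁) r) T' ∧
      leafCount T ≤ leafCount T' := by
  classical
  haveI : Finite (CVert (singleEdge x₁ x₁)) := Quotient.finite _
  have hinj : Function.Injective (cmk (singleEdge x₁ x₁) : V → CVert (singleEdge x₁ x₁)) :=
    cmk_inj_self
  refine ⟨fun p q => ∃ m n, cmk (singleEdge x₁ x₁) m = p ∧ cmk (singleEdge x₁ x₁) n = q ∧ T m n,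
    ⟨?_, ?_, ?_, ?_⟩, ?_⟩
  · rintro p q ⟨m, n, rfl, rfl, h⟩
    refine ⟨fun he => hT.not_self n ?_, m, n, rfl, rfl, hT.sub h⟩
    rw [hinj he] at h
    exact h
  · have himg : ∀ u v : V, Reaches T u v →
        Reaches (fun p q => ∃ m n, cmk (singleEdge x₁ x₁) m = p ∧ cmk (singleEdge x₁ x₁) n = q ∧
          T m n) (cmk (singleEdge x₁ x₁) u) (cmk (singleEdge x₁ x₁) v) := by
      intro u v h
      induction h with
      | refl => exact .refl
      | @tail p q hp hstep ih => exact ih.tail ⟨p, q, rfl, rfl, hstep⟩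
    intro q
    obtain ⟨v, rfl⟩ := cmk_surjective (singleEdge x₁ x₁) q
    exact himg r v (hT.reach v)
  · intro q hq
    obtain ⟨n, rfl⟩ := cmk_surjective (singleEdge x₁ x₁) q
    have hnr : n ≠ r := fun h => hq (by rw [h])
    obtain ⟨u₀, hu₀, huniq⟩ := hT.indeg n hnr
    refine ⟨cmk (singleEdge x₁ x₁) u₀, ⟨u₀, n, rfl, rfl, hu₀⟩, ?_⟩
    rintro p ⟨m', n', rfl, hn', h'⟩
    rw [hinj hn'] at h'
    rw [huniq m' h']
  · rintro p ⟨m, n, rfl, hn, h⟩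
    rw [hinj hn] at h
    exact hT.rootIndeg m h
  · refine Set.ncard_le_ncard_of_injOn (cmk (singleEdge x₁ x₁)) ?_
      (fun a _ b _ h => hinj h) (Set.toFinite _)
    intro v hv
    simp only [Set.mem_setOf_eq] at hv ⊢
    rintro q ⟨m, n, hm, -, h⟩
    rw [hinj hm] at h
    exact hv n h

lemma iso_d2 {T' : CVert (singleEdge x₁ x₁) → CVert (singleEdge x₁ x₁) → Prop}
    (hT' : IsOutbranching (contractE E (singleEdge x₁ x₁)) (cmk (singleEdge x₁ x₁) r) T') :
    ∃ T, IsOutbranching E r T ∧ leafCount T' ≤ leafCount T := by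
  classical
  have hinj : Function.Injective (cmk (singleEdge x₁ x₁) : V → CVert (singleEdge x₁ x₁)) :=
    cmk_inj_self
  have houtq : ∀ q : CVert (singleEdge x₁ x₁), cmk (singleEdge x₁ x₁) (Quotient.out q) = q :=
    fun q => Quotient.out_eq q
  refine ⟨fun m n => T' (cmk (singleEdge x₁ x₁) m) (cmk (singleEdge x₁ x₁) n), ⟨?_, ?_, ?_, ?_⟩, ?_⟩
  · intro m n h
    obtain ⟨-, u, v, hu, hv, huv⟩ := hT'.sub h
    rw [hinj hu, hinj hv] at huv
    exact huv
  · have hR : ∀ q, Reaches T' (cmk (singleEdge x₁ x₁) r) q → ∀ n, cmk (singleEdge x₁ x₁) n = q →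
        Reaches (fun m n => T' (cmk (singleEdge x₁ x₁) m) (cmk (singleEdge x₁ x₁) n)) r n := by
      intro q hq
      induction hq with
      | refl =>
        intro n hn
        rw [hinj hn]
        exact Relation.ReflTransGen.refl
      | @tail p q' hp hstep ih =>
        intro n hn
        have := ih (Quotient.out p) (houtq p)
        refine this.tail ?_
        show T' (cmk (singleEdge x₁ x₁) (Quotient.out p)) (cmk (singleEdge x₁ x₁) n)
        rw [houtq p, hn]
        exact hstep
    intro n
    exact hR _ (hT'.reach _) n rfl
  · intro n hnr
    have hq : cmk (singleEdge x₁ x₁) n ≠ cmk (singleEdge x₁ x₁) r := fun h => hnr (hinj h)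
    obtain ⟨p, hp, hu⟩ := hT'.indeg _ hq
    refine ⟨Quotient.out p, ?_, ?_⟩
    · show T' (cmk (singleEdge x₁ x₁) (Quotient.out p)) (cmk (singleEdge x₁ x₁) n)
      rw [houtq p]
      exact hp
    · intro m hm
      have h1 : cmk (singleEdge x₁ x₁) m = p := hu _ hm
      have h2 : Quotient.out p = m := by
        rw [← h1]
        exact hinj (houtq _)
      exact h2.symm
  · intro m h
    exact hT'.rootIndeg _ h
  · refine Set.ncard_le_ncard_of_injOn Quotient.out ?_
      (fun a _ b _ h => by rw [← houtq a, ← houtq b, h]) (Set.toFinite _)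
    intro q hq
    simp only [Set.mem_setOf_eq] at hq ⊢
    intro n h
    rw [houtq q] at h
    exact hq _ h

end Iso

/-- If `(x₁,y₁)` and `(x₂,y₂)` are cut-edges with both `(x₁,x₂)` and
`(x₂,x₁)` edges of `D`, and `D'` is obtained by contracting `(x₁,x₂)`, then
`maxleaf(D) = maxleaf(D')`; in particular, for every `k`, `D` has an outbranching with
at least `k` leaves iff `D'` does. -/
theorem contract_edge_between_cut_tails {V : Type} [Fintype V] (E : V → V → Prop)
    (r x₁ y₁ x₂ y₂ : V) (hroot : ∀ w, ¬ E w r) (hconn : Connected E r)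
    (h₁ : IsCutEdge E r x₁ y₁) (h₂ : IsCutEdge E r x₂ y₂)
    (e₁₂ : E x₁ x₂) (e₂₁ : E x₂ x₁) :
    maxleaf E r = maxleaf (contractE E (singleEdge x₁ x₂)) (cmk (singleEdge x₁ x₂) r) ∧
      ∀ k : ℕ,
        ((∃ T, IsOutbranching E r T ∧ k ≤ leafCount T) ↔
          (∃ T', IsOutbranching (contractE E (singleEdge x₁ x₂))
              (cmk (singleEdge x₁ x₂) r) T' ∧ k ≤ leafCount T')) := by
  classical
  haveI : Finite (CVert (singleEdge x₁ x₂)) := Quotient.finite _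
  have h1r : x₁ ≠ r := fun h => hroot x₂ (h ▸ e₂₁)
  have h2r : x₂ ≠ r := fun h => hroot x₁ (h ▸ e₁₂)
  have dir1 : ∀ T : V → V → Prop, IsOutbranching E r T →
      ∃ T', IsOutbranching (contractE E (singleEdge x₁ x₂)) (cmk (singleEdge x₁ x₂) r) T' ∧
        leafCount T ≤ leafCount T' := by
    intro T hT
    by_cases hx : x₁ = x₂
    · subst hx
      exact iso_d1 hT
    · obtain ⟨T₀, a, b, hT₀, hle, hab, hpairs⟩ :
          ∃ T₀ a b, IsOutbranching E r T₀ ∧ leafCount T ≤ leafCount T₀ ∧ T₀ a b ∧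
            ((a = x₁ ∧ b = x₂) ∨ (a = x₂ ∧ b = x₁)) := by
        by_cases hc1 : T x₁ x₂
        · exact ⟨T, x₁, x₂, hT, le_rfl, hc1, Or.inl ⟨rfl, rfl⟩⟩
        · by_cases hc2 : T x₂ x₁
          · exact ⟨T, x₂, x₁, hT, le_rfl, hc2, Or.inr ⟨rfl, rfl⟩⟩
          · by_cases hcr : Reaches T x₂ x₁
            · have hnab : ¬ Reaches T x₁ x₂ := fun h => hx (hT.reach_antisymm h hcr)
              obtain ⟨T₀, hh1, hh2, hh3⟩ :=
                reroute hT e₂₁ h1r hnab ⟨y₂, hT.contains_cutEdge h₂⟩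
              exact ⟨T₀, x₂, x₁, hh1, hh2, hh3, Or.inr ⟨rfl, rfl⟩⟩
            · obtain ⟨T₀, hh1, hh2, hh3⟩ :=
                reroute hT e₁₂ h2r hcr ⟨y₁, hT.contains_cutEdge h₁⟩
              exact ⟨T₀, x₁, x₂, hh1, hh2, hh3, Or.inl ⟨rfl, rfl⟩⟩
      rcases hpairs with ⟨ha, hb⟩ | ⟨ha, hb⟩ <;> rw [ha, hb] at hab
      · have hbl : ∃ y, T₀ x₂ y ∧ y ≠ x₁ ∧ y ≠ x₂ := by
          refine ⟨y₂, hT₀.contains_cutEdge h₂, fun h => ?_, fun h => (h₂.ne hconn) h.symm⟩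
          apply hx
          refine hT₀.reach_antisymm (Relation.ReflTransGen.single hab)
            (Relation.ReflTransGen.single ?_)
          rw [← h]
          exact hT₀.contains_cutEdge h₂
        obtain ⟨T', hh1, hh2⟩ := contract_direction hT₀ (Or.inl ⟨rfl, rfl⟩) hab hx h1r h2r hbl
        exact ⟨T', hh1, hle.trans hh2⟩
      · have hbl : ∃ y, T₀ x₁ y ∧ y ≠ x₁ ∧ y ≠ x₂ := by
          refine ⟨y₁, hT₀.contains_cutEdge h₁, fun h => (h₁.ne hconn) h.symm, fun h => ?_⟩
          apply hx
          refine hT₀.reach_antisymm (Relation.ReflTransGen.single ?_)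
            (Relation.ReflTransGen.single hab)
          rw [← h]
          exact hT₀.contains_cutEdge h₁
        obtain ⟨T', hh1, hh2⟩ := contract_direction hT₀ (Or.inr ⟨rfl, rfl⟩) hab hx h1r h2r hbl
        exact ⟨T', hh1, hle.trans hh2⟩
  have dir2 : ∀ T' : CVert (singleEdge x₁ x₂) → CVert (singleEdge x₁ x₂) → Prop,
      IsOutbranching (contractE E (singleEdge x₁ x₂)) (cmk (singleEdge x₁ x₂) r) T' →
      ∃ T, IsOutbranching E r T ∧ leafCount T' ≤ leafCount T := by
    intro T' hT'
    by_cases hx : x₁ = x₂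
    · subst hx
      exact iso_d2 hT'
    · exact lift_direction e₁₂ e₂₁ hx h1r h2r hT'
  have hiff : ∀ k : ℕ, (∃ T, IsOutbranching E r T ∧ k ≤ leafCount T) ↔
      (∃ T', IsOutbranching (contractE E (singleEdge x₁ x₂)) (cmk (singleEdge x₁ x₂) r) T' ∧
        k ≤ leafCount T') := by
    intro k
    constructor
    · rintro ⟨T, hT, hk⟩
      obtain ⟨T', hh1, hh2⟩ := dir1 T hT
      exact ⟨T', hh1, hk.trans hh2⟩
    · rintro ⟨T', hT', hk⟩
      obtain ⟨T, hh1, hh2⟩ := dir2 T' hT'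
      exact ⟨T, hh1, hk.trans hh2⟩
  refine ⟨?_, hiff⟩
  have hAne : {n | ∃ T, IsOutbranching E r T ∧ leafCount T = n}.Nonempty := by
    obtain ⟨T, hT⟩ := exists_outbranching hroot hconn
    exact ⟨leafCount T, T, hT, rfl⟩
  have hAbdd : BddAbove {n | ∃ T, IsOutbranching E r T ∧ leafCount T = n} := by
    refine ⟨Nat.card V, ?_⟩
    rintro n ⟨T, -, rfl⟩
    exact le_trans (Set.ncard_le_ncard (Set.subset_univ _) Set.finite_univ)
      (le_of_eq (Set.ncard_univ V))
  have hBne : {n | ∃ T', IsOutbranching (contractE E (singleEdge x₁ x₂))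
      (cmk (singleEdge x₁ x₂) r) T' ∧ leafCount T' = n}.Nonempty := by
    obtain ⟨T, hT⟩ := exists_outbranching hroot hconn
    obtain ⟨T', hh1, -⟩ := dir1 T hT
    exact ⟨leafCount T', T', hh1, rfl⟩
  have hBbdd : BddAbove {n | ∃ T', IsOutbranching (contractE E (singleEdge x₁ x₂))
      (cmk (singleEdge x₁ x₂) r) T' ∧ leafCount T' = n} := by
    refine ⟨Nat.card (CVert (singleEdge x₁ x₂)), ?_⟩
    rintro n ⟨T', -, rfl⟩
    exact le_trans (Set.ncard_le_ncard (Set.subset_univ _) Set.finite_univ)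
      (le_of_eq (Set.ncard_univ _))
  apply le_antisymm
  · obtain ⟨T, hT, hTc⟩ := Nat.sSup_mem hAne hAbdd
    obtain ⟨T', hh1, hh2⟩ := dir1 T hT
    calc maxleaf E r = leafCount T := hTc.symm
      _ ≤ leafCount T' := hh2
      _ ≤ maxleaf (contractE E (singleEdge x₁ x₂)) (cmk (singleEdge x₁ x₂) r) :=
        le_csSup hBbdd ⟨T', hh1, rfl⟩
  · obtain ⟨T', hT', hTc⟩ := Nat.sSup_mem hBne hBbdd
    obtain ⟨T, hh1, hh2⟩ := dir2 T' hT'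
    calc maxleaf (contractE E (singleEdge x₁ x₂)) (cmk (singleEdge x₁ x₂) r)
        = leafCount T' := hTc.symm
      _ ≤ leafCount T := hh2
      _ ≤ maxleaf E r := le_csSup hAbdd ⟨T, hh1, rfl⟩

end OutBranching
end
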